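/- arXiv:2102.09292 — 5 statements merged into one kernel-verified Lean document; each statement's English description precedes it below -/
import Mathlib

section
/- Let d ≥ 2 be a real number and let W be the 4×4 symmetric matrix with rows (0, d, 0, d−1), (d, 0, d−1, 0), (0, d−1, 0, 0), (d−1, 0, 0, 0). Then the second largest eigenvalue of W equals (−d + √(4 − 8d + 5d²))/2, and this is strictly positive. -/
open Matrix

private lemma det_smul_one_sub_eq_prod {W : Matrix (Fin 4) (Fin 4) ℝ} (hW : W.IsHermitian)
    (x : ℝ) :
    (x • (1 : Matrix (Fin 4) (Fin 4) ℝ) - W).det = ∏ i, (x - hW.eigenvalues i) := by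
  set U : Matrix (Fin 4) (Fin 4) ℝ := (hW.eigenvectorUnitary : Matrix (Fin 4) (Fin 4) ℝ)
  have hU : U * star U = 1 := (Matrix.mem_unitaryGroup_iff).mp hW.eigenvectorUnitary.2
  have h1 : x • (1 : Matrix (Fin 4) (Fin 4) ℝ) - W
      = U * (x • (1 : Matrix (Fin 4) (Fin 4) ℝ)
          - diagonal (RCLike.ofReal ∘ hW.eigenvalues)) * star U := by
    rw [mul_sub, sub_mul]
    congr 1
    · rw [mul_smul_comm, smul_mul_assoc, mul_one, hU]
    · exact hW.spectral_theorem
  rw [h1, det_mul_right_comm, hU, one_mul]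
  have h2 : x • (1 : Matrix (Fin 4) (Fin 4) ℝ) = diagonal (fun _ => x) := by
    simp [Matrix.smul_one_eq_diagonal]
  rw [h2, diagonal_sub, det_diagonal]
  simp

/-- For real `d ≥ 2`, the symmetric matrix with rows `(0,d,0,d−1), (d,0,d−1,0), (0,d−1,0,0),
(d−1,0,0,0)` has second largest eigenvalue `(−d + √(4 − 8d + 5d²))/2`, which is strictly
positive. -/
theorem second_eigenvalue_W6 (d : ℝ) (hd : 2 ≤ d)
    (W : Matrix (Fin 4) (Fin 4) ℝ)
    (hWdef : W = !![0, d, 0, d - 1; d, 0, d - 1, 0; 0, d - 1, 0, 0; d - 1, 0, 0, 0])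
    (hW : W.IsHermitian)
    (σ : Equiv.Perm (Fin 4)) (hσ : Antitone (hW.eigenvalues ∘ σ)) :
    (hW.eigenvalues ∘ σ) 1 = (-d + Real.sqrt (4 - 8 * d + 5 * d ^ 2)) / 2 ∧
      0 < (hW.eigenvalues ∘ σ) 1 := by
  set f : Fin 4 → ℝ := hW.eigenvalues ∘ σ with hf
  set s : ℝ := Real.sqrt (4 - 8 * d + 5 * d ^ 2) with hs
  have hsnn : (0:ℝ) ≤ s := Real.sqrt_nonneg _
  have hs2 : s ^ 2 = 4 - 8 * d + 5 * d ^ 2 := by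
    rw [hs, Real.sq_sqrt]; nlinarith
  have hds : d < s := by nlinarith
  -- the key polynomial identity
  have key : ∀ x : ℝ, ∏ i, (x - f i)
      = (x ^ 2 - d * x - (d - 1) ^ 2) * (x ^ 2 + d * x - (d - 1) ^ 2) := by
    intro x
    have h1 : ∏ i, (x - f i) = ∏ i, (x - hW.eigenvalues i) :=
      Equiv.prod_comp σ (fun j => x - hW.eigenvalues j)
    rw [h1, ← det_smul_one_sub_eq_prod hW x]
    have hM : x • (1 : Matrix (Fin 4) (Fin 4) ℝ) - W
        = !![x, -d, 0, 1 - d; -d, x, 1 - d, 0; 0, 1 - d, x, 0; 1 - d, 0, 0, x] := by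
      subst hWdef
      ext i j
      fin_cases i <;> fin_cases j <;> simp [Matrix.one_apply, Matrix.vecHead, Matrix.vecTail]
    rw [hM, Matrix.det_succ_row_zero]
    simp [Fin.sum_univ_succ, Matrix.det_fin_three, Matrix.submatrix_apply, Fin.succAbove,
      show Fin.castSucc 2 = (2 : Fin 4) from rfl]
    ring
  -- the four roots
  have root : ∀ y : ℝ, (y ^ 2 - d * y - (d - 1) ^ 2) * (y ^ 2 + d * y - (d - 1) ^ 2) = 0 →
      ∃ i, f i = y := by
    intro y hy
    have := (key y).trans hy
    obtain ⟨i, -, hi⟩ := Finset.prod_eq_zero_iff.mp this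
    exact ⟨i, by linarith [sub_eq_zero.mp hi]⟩
  obtain ⟨ia, hia⟩ := root ((d + s) / 2) (by
    have : ((d + s) / 2) ^ 2 - d * ((d + s) / 2) - (d - 1) ^ 2 = 0 := by
      linear_combination hs2 / 4
    rw [this, zero_mul])
  obtain ⟨ib, hib⟩ := root ((-d + s) / 2) (by
    have : ((-d + s) / 2) ^ 2 + d * ((-d + s) / 2) - (d - 1) ^ 2 = 0 := by
      linear_combination hs2 / 4
    rw [this, mul_zero])
  obtain ⟨ic, hic⟩ := root ((d - s) / 2) (by
    have : ((d - s) / 2) ^ 2 - d * ((d - s) / 2) - (d - 1) ^ 2 = 0 := by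
      linear_combination hs2 / 4
    rw [this, zero_mul])
  obtain ⟨ie, hie⟩ := root ((-d - s) / 2) (by
    have : ((-d - s) / 2) ^ 2 + d * ((-d - s) / 2) - (d - 1) ^ 2 = 0 := by
      linear_combination hs2 / 4
    rw [this, mul_zero])
  -- strict ordering of indices
  have hlt : ∀ {i j : Fin 4}, f j < f i → i < j := by
    intro i j hij
    by_contra h
    push_neg at h
    exact absurd (hσ h) (not_le.mpr hij)
  have h1 : ia < ib := hlt (by rw [hia, hib]; linarith)
  have h2 : ib < ic := hlt (by rw [hib, hic]; linarith)
  have h3 : ic < ie := hlt (by rw [hic, hie]; linarith)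
  have hib1 : ib = (1 : Fin 4) := by
    have v1 : ia.val < ib.val := h1
    have v2 : ib.val < ic.val := h2
    have v3 : ic.val < ie.val := h3
    have v4 : ie.val < 4 := ie.isLt
    apply Fin.ext
    simp only [Fin.val_one]
    omega
  rw [hib1] at hib
  refine ⟨hib, ?_⟩
  rw [hib]
  linarith
end

section
/- If G is a connected graph with exactly one positive anti-adjacency eigenvalue, then the diameter of G is at most 2. -/
/-- The eccentricity of a vertex `u` in a graph `G`: the maximum distance from `u`. -/
noncomputable def ecc {V : Type*} [Fintype V] (G : SimpleGraph V) (u : V) : ℕ :=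
  Finset.univ.sup (G.dist u)

/-- The anti-adjacency (eccentricity) matrix of a graph: the `(u,v)` entry is `d_G(u,v)`
if `d_G(u,v) = min (ε_G(u)) (ε_G(v))`, and `0` otherwise. -/
noncomputable def antiAdj {V : Type*} [Fintype V] (G : SimpleGraph V) : Matrix V V ℝ :=
  Matrix.of fun u v =>
    if G.dist u v = min (ecc G u) (ecc G v) then (G.dist u v : ℝ) else 0

open Matrix

namespace AntiAdjAux

variable {V : Type*} [Fintype V] [DecidableEq V]

lemma dotProduct_fsum (z : V → ℝ) (w : V → V → ℝ) :
    z ⬝ᵥ (∑ i, w i) = ∑ i, z ⬝ᵥ w i := by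
  simp only [dotProduct, Finset.sum_apply, Finset.mul_sum]
  exact Finset.sum_comm

lemma dot_single (A : Matrix V V ℝ) (a b : ℝ) (i j : V) :
    Pi.single i a ⬝ᵥ A *ᵥ Pi.single j b = a * (A i j * b) := by
  rw [Matrix.mulVec_single, single_dotProduct]; rfl

lemma quad_sum (A : Matrix V V ℝ) (hH : A.IsHermitian) (z : EuclideanSpace ℝ V) :
    z ⬝ᵥ A *ᵥ z = ∑ i, hH.eigenvalues i * (inner (𝕜 := ℝ) (hH.eigenvectorBasis i) z)^2 := by
  set b := hH.eigenvectorBasis with hb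
  set c : V → ℝ := fun i => inner (𝕜 := ℝ) (b i) z with hc
  have hz : z = ∑ i, c i • (b i : EuclideanSpace ℝ V) := by
    rw [← b.sum_repr z]
    congr 1; ext i
    rw [b.repr_apply_apply]
  have hdot : ∀ i, z ⬝ᵥ (b i : V → ℝ) = c i := by
    intro i
    have h1 : c i = inner (𝕜 := ℝ) (b i) z := rfl
    rw [h1, real_inner_comm]
    simp [PiLp.inner_apply, dotProduct]
    exact Finset.sum_congr rfl fun _ _ => mul_comm _ _
  have hmv : A *ᵥ (z : V → ℝ) = ∑ i, (c i * hH.eigenvalues i) • ((b i : EuclideanSpace ℝ V) : V → ℝ) := by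
    conv_lhs => rw [hz]
    rw [WithLp.ofLp_sum]
    rw [← A.mulVecLin_apply, map_sum]
    refine Finset.sum_congr rfl fun i _ => ?_
    rw [WithLp.ofLp_smul, LinearMap.map_smul, A.mulVecLin_apply]
    have h := congrArg (fun (w : V → ℝ) => c i • w) (hH.mulVec_eigenvectorBasis i)
    exact h.trans (smul_smul (c i) (hH.eigenvalues i) _)
  rw [hmv, dotProduct_fsum]
  refine Finset.sum_congr rfl fun i _ => ?_
  rw [dotProduct_smul, hdot i]
  simp only [smul_eq_mul]
  ring

lemma no_pd_pair (A : Matrix V V ℝ) (hH : A.IsHermitian)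
    (hone : (Finset.univ.filter (fun i => 0 < hH.eigenvalues i)).card = 1)
    (y1 y2 : V → ℝ)
    (h1 : 0 < y1 ⬝ᵥ A *ᵥ y1) (h2 : 0 < y2 ⬝ᵥ A *ᵥ y2)
    (hc : (y1 ⬝ᵥ A *ᵥ y2)^2 < (y1 ⬝ᵥ A *ᵥ y1) * (y2 ⬝ᵥ A *ᵥ y2)) : False := by
  obtain ⟨i0, hi0⟩ := Finset.card_eq_one.mp hone
  have hneg : ∀ i, i ≠ i0 → hH.eigenvalues i ≤ 0 := by
    intro i hi
    by_contra h
    push_neg at h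
    have : i ∈ Finset.univ.filter (fun i => 0 < hH.eigenvalues i) := by
      simp [h]
    rw [hi0, Finset.mem_singleton] at this
    exact hi this
  have key : ∀ z : V → ℝ, inner (𝕜 := ℝ) (hH.eigenvectorBasis i0) (WithLp.toLp 2 z : EuclideanSpace ℝ V) = 0 →
      z ⬝ᵥ A *ᵥ z ≤ 0 := by
    intro z hz
    rw [quad_sum A hH (WithLp.toLp 2 z)]
    apply Finset.sum_nonpos
    intro i _
    by_cases h : i = i0
    · subst h; rw [hz]; simp
    · exact mul_nonpos_of_nonpos_of_nonneg (hneg i h) (sq_nonneg _)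
  set a1 : ℝ := inner (𝕜 := ℝ) (hH.eigenvectorBasis i0) (WithLp.toLp 2 y1 : EuclideanSpace ℝ V) with ha1
  set a2 : ℝ := inner (𝕜 := ℝ) (hH.eigenvectorBasis i0) (WithLp.toLp 2 y2 : EuclideanSpace ℝ V) with ha2
  by_cases h0 : a1 = 0
  · have := key y1 (by rw [← ha1]; exact h0)
    linarith
  · set s : ℝ := a2 with hs
    set t : ℝ := -a1 with hts
    set z : V → ℝ := s • y1 + t • y2 with hzdef
    have hinner : inner (𝕜 := ℝ) (hH.eigenvectorBasis i0) (WithLp.toLp 2 z : EuclideanSpace ℝ V) = 0 := by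
      have : (WithLp.toLp 2 z : EuclideanSpace ℝ V) = s • (WithLp.toLp 2 y1 : EuclideanSpace ℝ V) + t • (WithLp.toLp 2 y2 : EuclideanSpace ℝ V) := rfl
      rw [this, inner_add_right, inner_smul_right, inner_smul_right, ← ha1, ← ha2]
      ring
    have hq := key z hinner
    have hexp : z ⬝ᵥ A *ᵥ z =
        s^2 * (y1 ⬝ᵥ A *ᵥ y1) + 2*s*t*(y1 ⬝ᵥ A *ᵥ y2) + t^2 * (y2 ⬝ᵥ A *ᵥ y2) := by
      have hsym : y2 ⬝ᵥ A *ᵥ y1 = y1 ⬝ᵥ A *ᵥ y2 := by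
        simp only [dotProduct, mulVec, Finset.mul_sum]
        rw [Finset.sum_comm]
        refine Finset.sum_congr rfl fun i _ => Finset.sum_congr rfl fun j _ => ?_
        have := hH.apply i j
        rw [star_trivial] at this
        rw [this]; ring
      rw [hzdef]
      simp only [add_dotProduct, smul_dotProduct, Matrix.mulVec_add, Matrix.mulVec_smul,
        dotProduct_add, dotProduct_smul, smul_eq_mul]
      rw [hsym]; ring
    rw [hexp] at hq
    have ht2 : 0 < t^2 := by
      refine pow_two_pos_of_ne_zero ?_
      rw [hts, neg_ne_zero]
      exact h0
    nlinarith [sq_nonneg (s * (y1 ⬝ᵥ A *ᵥ y1) + t * (y1 ⬝ᵥ A *ᵥ y2)),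
      mul_pos ht2 (sub_pos.mpr hc), mul_pos h1 h2]

variable (G : SimpleGraph V)

lemma dist_le_ecc (u v : V) : G.dist u v ≤ ecc G u := Finset.le_sup (Finset.mem_univ v)

lemma exists_ecc [Nonempty V] (u : V) : ∃ v, G.dist u v = ecc G u := by
  obtain ⟨v, -, hv⟩ := Finset.exists_mem_eq_sup Finset.univ Finset.univ_nonempty (G.dist u)
  exact ⟨v, hv.symm⟩

lemma antiAdj_eq (u v : V) (h : G.dist u v = min (ecc G u) (ecc G v)) :
    antiAdj G u v = (G.dist u v : ℝ) := by
  simp only [antiAdj, Matrix.of_apply, if_pos h]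

lemma antiAdj_ne (u v : V) (h : G.dist u v ≠ min (ecc G u) (ecc G v)) :
    antiAdj G u v = 0 := by
  simp only [antiAdj, Matrix.of_apply, if_neg h]

lemma antiAdj_symm (u v : V) : antiAdj G v u = antiAdj G u v := by
  simp only [antiAdj, Matrix.of_apply]
  rw [SimpleGraph.dist_comm, min_comm]

lemma step_lemma (hG : G.Connected) {u v : V} (h : 1 ≤ G.dist u v) :
    ∃ x, G.dist u x = 1 ∧ G.dist x v = G.dist u v - 1 := by
  obtain ⟨p, hp⟩ := hG.exists_walk_length_eq_dist u v
  cases p with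
  | nil => simp at h
  | @cons _ w _ hadj q =>
    refine ⟨w, SimpleGraph.dist_eq_one_iff_adj.mpr hadj, ?_⟩
    have h1 : G.dist w v ≤ q.length := SimpleGraph.dist_le q
    have h2 : (q.length + 1 : ℕ) = G.dist u v := by simpa using hp
    have h3 : G.dist u v ≤ G.dist u w + G.dist w v := hG.dist_triangle
    have h4 : G.dist u w = 1 := SimpleGraph.dist_eq_one_iff_adj.mpr hadj
    omega

/-- Sub-lemma: the configuration with two "heavy pairs" `{u,v}` and `{x,w}` with small cross
terms contradicts having exactly one positive eigenvalue. -/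
lemma pairCase (A : Matrix V V ℝ) (hH : A.IsHermitian)
    (hone : (Finset.univ.filter (fun i => 0 < hH.eigenvalues i)).card = 1)
    (u v x w : V) (D E a b c e : ℝ) (hD : 0 < D) (hE : 0 < E)
    (huu : A u u = 0) (hvv : A v v = 0) (hxx : A x x = 0) (hww : A w w = 0)
    (huv : A u v = D) (hvu : A v u = D)
    (hxw : A x w = E) (hwx : A w x = E)
    (hux : A u x = a) (hxu : A x u = a) (huw : A u w = b) (hwu : A w u = b)
    (hvx : A v x = c) (hxv : A x v = c) (hvw : A v w = e) (hwv : A w v = e)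
    (hcross : (a + b + c + e)^2 < 4 * D * E) : False := by
  refine no_pd_pair A hH hone (Pi.single u 1 + Pi.single v 1) (Pi.single x 1 + Pi.single w 1)
    ?_ ?_ ?_ <;>
  · simp only [add_dotProduct, dotProduct_add, Matrix.mulVec_add, dot_single,
      huu, hvv, hxx, hww, huv, hvu, hxw, hwx, hux, hxu, huw, hwu, hvx, hxv, hvw, hwv,
      one_mul, mul_one]
    nlinarith [sq_nonneg (a+b+c+e)]

/-- Sub-lemma for the "triangle plus pendant" configuration. -/
lemma triCase (A : Matrix V V ℝ) (hH : A.IsHermitian)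
    (hone : (Finset.univ.filter (fun i => 0 < hH.eigenvalues i)).card = 1)
    (u v x w : V) (D : ℝ) (hD : 0 < D)
    (huu : A u u = 0) (hvv : A v v = 0) (hxx : A x x = 0) (hww : A w w = 0)
    (huv : A u v = D) (hvu : A v u = D)
    (hxw : A x w = D) (hwx : A w x = D)
    (hux : A u x = 0) (hxu : A x u = 0) (huw : A u w = D) (hwu : A w u = D)
    (hvx : A v x = 0) (hxv : A x v = 0) (hvw : A v w = D) (hwv : A w v = D) : False := by
  refine no_pd_pair A hH hone (Pi.single u 1 + Pi.single v 1 + Pi.single w 1)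
    (Pi.single u 1 + Pi.single v 1 - Pi.single w 1 - Pi.single x (2:ℝ))
    ?_ ?_ ?_ <;>
  · simp only [add_dotProduct, sub_dotProduct, dotProduct_add, dotProduct_sub,
      Matrix.mulVec_add, Matrix.mulVec_sub, dot_single,
      huu, hvv, hxx, hww, huv, hvu, hxw, hwx, hux, hxu, huw, hwu, hvx, hxv, hvw, hwv,
      one_mul, mul_one]
    nlinarith

/-- Case where the neighbour `x` of `u` on a geodesic has full eccentricity. -/
lemma caseA (hH : (antiAdj G).IsHermitian)
    (hone : (Finset.univ.filter (fun i => 0 < hH.eigenvalues i)).card = 1)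
    (k : ℕ) (hsup : ∀ t, ecc G t ≤ k + 3)
    (u v x : V) (hu : ecc G u = k + 3) (hv : ecc G v = k + 3) (huv : G.dist u v = k + 3)
    (hux : G.dist u x = 1) (hxv : G.dist x v = k + 2) (hex : ecc G x = k + 3) : False := by
  haveI : Nonempty V := ⟨u⟩
  obtain ⟨w, hw⟩ := exists_ecc G x
  rw [hex] at hw
  have hew : ecc G w = k + 3 := by
    have h1 : G.dist w x ≤ ecc G w := dist_le_ecc G w x
    have h2 : G.dist w x = k + 3 := by rw [SimpleGraph.dist_comm]; exact hw
    have := hsup w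
    omega
  have hkR : (0:ℝ) ≤ (k:ℝ) := Nat.cast_nonneg k
  -- diagonal entries
  have hdg : ∀ t : V, ecc G t ≠ 0 → antiAdj G t t = 0 := fun t ht =>
    antiAdj_ne G t t (by rw [SimpleGraph.dist_self]; omega)
  have hAuu : antiAdj G u u = 0 := hdg u (by omega)
  have hAvv : antiAdj G v v = 0 := hdg v (by omega)
  have hAxx : antiAdj G x x = 0 := hdg x (by omega)
  have hAww : antiAdj G w w = 0 := hdg w (by omega)
  have hAuv : antiAdj G u v = (k:ℝ) + 3 := by
    rw [antiAdj_eq G u v (by rw [huv, hu, hv]; omega), huv]; push_cast; ring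
  have hAxw : antiAdj G x w = (k:ℝ) + 3 := by
    rw [antiAdj_eq G x w (by rw [hw, hex, hew]; omega), hw]; push_cast; ring
  have hAux : antiAdj G u x = 0 := antiAdj_ne G u x (by rw [hux, hu, hex]; omega)
  have hAvx : antiAdj G v x = 0 := antiAdj_ne G v x
    (by rw [SimpleGraph.dist_comm, hxv, hv, hex]; omega)
  by_cases hP : G.dist u w = k + 3 <;> by_cases hQ : G.dist v w = k + 3
  · -- both far: triangle configuration
    have hAuw : antiAdj G u w = (k:ℝ) + 3 := by
      rw [antiAdj_eq G u w (by rw [hP, hu, hew]; omega), hP]; push_cast; ring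
    have hAvw : antiAdj G v w = (k:ℝ) + 3 := by
      rw [antiAdj_eq G v w (by rw [hQ, hv, hew]; omega), hQ]; push_cast; ring
    exact triCase (antiAdj G) hH hone u v x w ((k:ℝ)+3) (by linarith)
      hAuu hAvv hAxx hAww hAuv ((antiAdj_symm G u v).trans hAuv) hAxw ((antiAdj_symm G x w).trans hAxw)
      hAux ((antiAdj_symm G u x).trans hAux) hAuw ((antiAdj_symm G u w).trans hAuw)
      hAvx ((antiAdj_symm G v x).trans hAvx) hAvw ((antiAdj_symm G v w).trans hAvw)
  all_goals {
    -- at most one of u,v is far from w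
    have hAuw : antiAdj G u w = (if G.dist u w = k + 3 then ((k:ℝ)+3) else 0) := by
      by_cases h : G.dist u w = k + 3
      · rw [if_pos h, antiAdj_eq G u w (by rw [h, hu, hew]; omega), h]; push_cast; ring
      · rw [if_neg h]; exact antiAdj_ne G u w (by rw [hu, hew]; omega)
    have hAvw : antiAdj G v w = (if G.dist v w = k + 3 then ((k:ℝ)+3) else 0) := by
      by_cases h : G.dist v w = k + 3
      · rw [if_pos h, antiAdj_eq G v w (by rw [h, hv, hew]; omega), h]; push_cast; ring
      · rw [if_neg h]; exact antiAdj_ne G v w (by rw [hv, hew]; omega)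
    refine pairCase (antiAdj G) hH hone u v x w ((k:ℝ)+3) ((k:ℝ)+3) 0 (antiAdj G u w) 0 (antiAdj G v w)
      (by linarith) (by linarith)
      hAuu hAvv hAxx hAww hAuv ((antiAdj_symm G u v).trans hAuv) hAxw ((antiAdj_symm G x w).trans hAxw)
      hAux ((antiAdj_symm G u x).trans hAux) rfl (antiAdj_symm G u w)
      hAvx ((antiAdj_symm G v x).trans hAvx) rfl (antiAdj_symm G v w)
      ?_
    rw [hAuw, hAvw]
    first
    | (rw [if_pos hP, if_neg hQ]; nlinarith)
    | (rw [if_neg hP, if_pos hQ]; nlinarith)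
    | (rw [if_neg hP, if_neg hQ]; nlinarith) }

/-- Case where both geodesic neighbours have eccentricity `d - 1`. -/
lemma caseC (hH : (antiAdj G).IsHermitian)
    (hone : (Finset.univ.filter (fun i => 0 < hH.eigenvalues i)).card = 1)
    (k : ℕ)
    (u v x y : V) (hu : ecc G u = k + 3) (hv : ecc G v = k + 3) (huv : G.dist u v = k + 3)
    (hux : G.dist u x = 1) (hxv : G.dist x v = k + 2) (hex : ecc G x = k + 2)
    (hvy : G.dist v y = 1) (hyu : G.dist y u = k + 2) (hey : ecc G y = k + 2) : False := by
  have hkR : (0:ℝ) ≤ (k:ℝ) := Nat.cast_nonneg k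
  have hdg : ∀ t : V, ecc G t ≠ 0 → antiAdj G t t = 0 := fun t ht =>
    antiAdj_ne G t t (by rw [SimpleGraph.dist_self]; omega)
  have hAuu : antiAdj G u u = 0 := hdg u (by omega)
  have hAvv : antiAdj G v v = 0 := hdg v (by omega)
  have hAxx : antiAdj G x x = 0 := hdg x (by omega)
  have hAyy : antiAdj G y y = 0 := hdg y (by omega)
  have hAuv : antiAdj G u v = (k:ℝ) + 3 := by
    rw [antiAdj_eq G u v (by rw [huv, hu, hv]; omega), huv]; push_cast; ring
  have hAuy : antiAdj G u y = (k:ℝ) + 2 := by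
    have h : G.dist u y = k + 2 := by rw [SimpleGraph.dist_comm]; exact hyu
    rw [antiAdj_eq G u y (by rw [h, hu, hey]; omega), h]; push_cast; ring
  have hAvx : antiAdj G v x = (k:ℝ) + 2 := by
    have h : G.dist v x = k + 2 := by rw [SimpleGraph.dist_comm]; exact hxv
    rw [antiAdj_eq G v x (by rw [h, hv, hex]; omega), h]; push_cast; ring
  have hAux : antiAdj G u x = 0 := antiAdj_ne G u x (by rw [hux, hu, hex]; omega)
  have hAvy : antiAdj G v y = 0 := antiAdj_ne G v y (by rw [hvy, hv, hey]; omega)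
  by_cases hr : G.dist x y = k + 2
  · -- heavy pairs {u,v} (weight k+3) and {x,y} (weight k+2)
    have hAxy : antiAdj G x y = (k:ℝ) + 2 := by
      rw [antiAdj_eq G x y (by rw [hr, hex, hey]; omega), hr]; push_cast; ring
    refine pairCase (antiAdj G) hH hone u v x y ((k:ℝ)+3) ((k:ℝ)+2) 0 ((k:ℝ)+2) ((k:ℝ)+2) 0
      (by linarith) (by linarith)
      hAuu hAvv hAxx hAyy hAuv ((antiAdj_symm G u v).trans hAuv) hAxy ((antiAdj_symm G x y).trans hAxy)
      hAux ((antiAdj_symm G u x).trans hAux) hAuy ((antiAdj_symm G u y).trans hAuy)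
      hAvx ((antiAdj_symm G v x).trans hAvx) hAvy ((antiAdj_symm G v y).trans hAvy)
      (by nlinarith)
  · -- heavy pairs {u,y} and {v,x}, both weight k+2
    have hAxy : antiAdj G x y = 0 := antiAdj_ne G x y (by rw [hex, hey]; omega)
    refine pairCase (antiAdj G) hH hone u y v x ((k:ℝ)+2) ((k:ℝ)+2) ((k:ℝ)+3) 0 0 0
      (by linarith) (by linarith)
      hAuu hAyy hAvv hAxx hAuy ((antiAdj_symm G u y).trans hAuy) hAvx ((antiAdj_symm G v x).trans hAvx)
      hAuv ((antiAdj_symm G u v).trans hAuv) hAux ((antiAdj_symm G u x).trans hAux)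
      ((antiAdj_symm G v y).trans hAvy) hAvy ((antiAdj_symm G x y).trans hAxy) hAxy
      (by nlinarith)

end AntiAdjAux

/-- A connected graph with exactly one positive anti-adjacency eigenvalue has diameter
at most 2. -/
theorem diam_le_two_of_one_positive_antiadjacency_eigenvalue
    {V : Type*} [Fintype V] [DecidableEq V] (G : SimpleGraph V) (hG : G.Connected)
    (hH : (antiAdj G).IsHermitian)
    (hone : (Finset.univ.filter (fun i => 0 < hH.eigenvalues i)).card = 1) :
    Finset.univ.sup (ecc G) ≤ 2 := by
  by_contra hcon
  push_neg at hcon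
  rcases isEmpty_or_nonempty V with hV | hV
  · rw [Finset.univ_eq_empty] at hcon; simp at hcon
  obtain ⟨u, -, hu⟩ := Finset.exists_mem_eq_sup (Finset.univ) Finset.univ_nonempty (ecc G)
  obtain ⟨k, hk⟩ : ∃ k, Finset.univ.sup (ecc G) = k + 3 := ⟨Finset.univ.sup (ecc G) - 3, by omega⟩
  have hsup : ∀ t, ecc G t ≤ k + 3 := fun t => hk ▸ Finset.le_sup (Finset.mem_univ t)
  have hu' : ecc G u = k + 3 := by rw [← hu]; exact hk
  obtain ⟨v, hv⟩ := AntiAdjAux.exists_ecc G u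
  have huv : G.dist u v = k + 3 := by rw [hv, hu']
  have hv' : ecc G v = k + 3 := by
    have h1 : G.dist v u ≤ ecc G v := AntiAdjAux.dist_le_ecc G v u
    have h2 : G.dist v u = k + 3 := by rw [SimpleGraph.dist_comm]; exact huv
    have := hsup v
    omega
  obtain ⟨x, hux, hxv0⟩ := AntiAdjAux.step_lemma G hG (u := u) (v := v) (by omega)
  have hxv : G.dist x v = k + 2 := by omega
  have hexb : k + 2 ≤ ecc G x := hxv ▸ AntiAdjAux.dist_le_ecc G x v
  rcases (show ecc G x = k + 3 ∨ ecc G x = k + 2 by have := hsup x; omega) with hex | hex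
  · exact AntiAdjAux.caseA G hH hone k hsup u v x hu' hv' huv hux hxv hex
  · have hvu : G.dist v u = k + 3 := by rw [SimpleGraph.dist_comm]; exact huv
    obtain ⟨y, hvy, hyu0⟩ := AntiAdjAux.step_lemma G hG (u := v) (v := u) (by omega)
    have hyu : G.dist y u = k + 2 := by omega
    have heyb : k + 2 ≤ ecc G y := hyu ▸ AntiAdjAux.dist_le_ecc G y u
    rcases (show ecc G y = k + 3 ∨ ecc G y = k + 2 by have := hsup y; omega) with hey | hey
    · exact AntiAdjAux.caseA G hH hone k hsup v u y hv' hu' hvu hvy hyu hey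
    · exact AntiAdjAux.caseC G hH hone k u v x y hu' hv' huv hux hxv hex hvy hyu hey
end

section
/- If G is a connected graph with exactly one positive anti-adjacency eigenvalue, then G contains no induced subgraph isomorphic to the path P_4 on four vertices. -/
open Matrix Finset

lemma quad_form_eq {n : Type*} [Fintype n] [DecidableEq n]
    (A : Matrix n n ℝ) (hA : A.IsHermitian) (v w : n → ℝ) :
    v ⬝ᵥ A.mulVec w =
      ∑ i, hA.eigenvalues i *
        (((star (hA.eigenvectorUnitary : Matrix n n ℝ)).mulVec v) i *
         ((star (hA.eigenvectorUnitary : Matrix n n ℝ)).mulVec w) i) := by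
  set U : Matrix n n ℝ := (hA.eigenvectorUnitary : Matrix n n ℝ) with hU
  have hsU : star U = Uᵀ := by
    ext i j
    simp [Matrix.star_eq_conjTranspose, Matrix.conjTranspose_apply]
  have hspec := hA.spectral_theorem
  rw [Unitary.conjStarAlgAut_apply] at hspec
  conv_lhs => rw [hspec]
  rw [← hU]
  rw [← Matrix.mulVec_mulVec, ← Matrix.mulVec_mulVec, Matrix.dotProduct_mulVec]
  rw [hsU, Matrix.mulVec_transpose]
  simp only [dotProduct, Matrix.mulVec_diagonal, Matrix.mulVec_transpose,
    Function.comp_apply, RCLike.ofReal_real_eq_id, id_eq]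
  exact Finset.sum_congr rfl fun i _ => by ring

lemma no_two_pos {n : Type*} [Fintype n] [DecidableEq n]
    (A : Matrix n n ℝ) (hA : A.IsHermitian)
    (hone : (Finset.univ.filter (fun i => 0 < hA.eigenvalues i)).card ≤ 1)
    (v w : n → ℝ) (hv : 0 < v ⬝ᵥ A.mulVec v) (hw : 0 < w ⬝ᵥ A.mulVec w)
    (hvw : v ⬝ᵥ A.mulVec w = 0) : False := by
  classical
  set U : Matrix n n ℝ := (star (hA.eigenvectorUnitary : Matrix n n ℝ)) with hU
  set lam := hA.eigenvalues with hlam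
  set y := U.mulVec v with hy
  set z := U.mulVec w with hz
  have hqv : v ⬝ᵥ A.mulVec v = ∑ i, lam i * (y i * y i) := quad_form_eq A hA v v
  have hqw : w ⬝ᵥ A.mulVec w = ∑ i, lam i * (z i * z i) := quad_form_eq A hA w w
  have hqvw : v ⬝ᵥ A.mulVec w = ∑ i, lam i * (y i * z i) := quad_form_eq A hA v w
  -- general fact: sum over nonpositive entries (off the positive set) is ≤ 0
  set S := Finset.univ.filter (fun i => 0 < lam i) with hS
  have hsum_le : ∀ t : n → ℝ, (∀ i ∈ S, t i = 0) → ∑ i, lam i * (t i * t i) ≤ 0 := by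
    intro t ht
    apply Finset.sum_nonpos
    intro i _
    by_cases hiS : i ∈ S
    · simp [ht i hiS]
    · have : ¬ 0 < lam i := by
        intro h; exact hiS (by simp [hS, h])
      have hle : lam i ≤ 0 := le_of_not_gt this
      exact mul_nonpos_of_nonpos_of_nonneg hle (mul_self_nonneg _)
  haveI : Nonempty n := by
    rcases isEmpty_or_nonempty n with he | h
    · rw [dotProduct] at hv; simp at hv
    · exact h
  rcases Finset.card_le_one_iff_subset_singleton.mp hone with ⟨i0, hsub⟩
  by_cases hy0 : y i0 = 0
  · have : ∑ i, lam i * (y i * y i) ≤ 0 := by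
      apply hsum_le
      intro i hi
      have : i = i0 := by
        have := hsub hi; simpa using this
      rw [this]; exact hy0
    rw [hqv] at hv; linarith
  · set u := (z i0) • v + (-(y i0)) • w with hu
    have hyu : U.mulVec u = (z i0) • y + (-(y i0)) • z := by
      rw [hu, Matrix.mulVec_add, Matrix.mulVec_smul, Matrix.mulVec_smul, hy, hz]
    have hqu : u ⬝ᵥ A.mulVec u = ∑ i, lam i * ((z i0 * y i - y i0 * z i) * (z i0 * y i - y i0 * z i)) := by
      rw [quad_form_eq A hA u u, ← hU, ← hlam, hyu]
      exact Finset.sum_congr rfl fun i _ => by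
        simp only [Pi.add_apply, Pi.smul_apply, smul_eq_mul, neg_mul]
        ring
    -- expand q(u) bilinearly
    have hbil : u ⬝ᵥ A.mulVec u
        = (z i0)^2 * (v ⬝ᵥ A.mulVec v) + (y i0)^2 * (w ⬝ᵥ A.mulVec w)
          - 2 * (z i0) * (y i0) * (v ⬝ᵥ A.mulVec w) := by
      have hsymm : w ⬝ᵥ A.mulVec v = v ⬝ᵥ A.mulVec w := by
        rw [quad_form_eq A hA w v, quad_form_eq A hA v w]
        exact Finset.sum_congr rfl fun i _ => by ring
      rw [hu]
      rw [Matrix.mulVec_add, Matrix.mulVec_smul, Matrix.mulVec_smul]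
      rw [add_dotProduct, smul_dotProduct, smul_dotProduct]
      rw [dotProduct_add, dotProduct_add,
        dotProduct_smul, dotProduct_smul, dotProduct_smul,
        dotProduct_smul]
      rw [hsymm]
      simp [smul_eq_mul]; ring
    have hpos : 0 < u ⬝ᵥ A.mulVec u := by
      rw [hbil, hvw]
      have h1 : 0 ≤ (z i0)^2 * (v ⬝ᵥ A.mulVec v) := by positivity
      have h2 : 0 < (y i0)^2 * (w ⬝ᵥ A.mulVec w) := by positivity
      linarith
    have hnonpos : u ⬝ᵥ A.mulVec u ≤ 0 := by
      rw [hqu]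
      apply hsum_le
      intro i hi
      have hii : i = i0 := by have := hsub hi; simpa using this
      rw [hii]; ring
    linarith

lemma gadget {n : Type*} [Fintype n] [DecidableEq n]
    (A : Matrix n n ℝ) (hA : A.IsHermitian)
    (hone : (Finset.univ.filter (fun i => 0 < hA.eigenvalues i)).card ≤ 1)
    (hdiag : ∀ i, A i i = 0) (hsymm : ∀ i j, A i j = A j i)
    (p q r s : n)
    (hpq : 0 < A p q) (hrs : 0 < A r s) (hqr : A q r = 0) (hqs : A q s = 0) : False := by
  classical
  set t : ℝ := -(A p r + A p s) / A p q with ht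
  set v : n → ℝ := Pi.single p 1 + Pi.single q 1 with hv
  set w : n → ℝ := Pi.single r 1 + Pi.single s 1 + Pi.single q t with hw
  have hsv : ∀ (z : n) (c : ℝ) (u : n → ℝ),
      (Pi.single z c : n → ℝ) ⬝ᵥ A.mulVec u = c * (A.mulVec u z) :=
    fun z c u => single_dotProduct _ _ _
  have happ : ∀ (x z : n) (c : ℝ), A.mulVec (Pi.single z c) x = A x z * c := by
    intro x z c; rw [Matrix.mulVec_single]; rfl
  have hrq : A r q = 0 := (hsymm r q).trans hqr
  have hsq : A s q = 0 := (hsymm s q).trans hqs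
  have hqv : v ⬝ᵥ A.mulVec v = 2 * A p q := by
    rw [hv]
    simp only [Matrix.mulVec_add, dotProduct_add, add_dotProduct, hsv, happ]
    rw [hdiag p, hdiag q, hsymm q p]
    ring
  have hqw : w ⬝ᵥ A.mulVec w = 2 * A r s := by
    rw [hw]
    simp only [Matrix.mulVec_add, dotProduct_add, add_dotProduct, hsv, happ]
    rw [hdiag r, hdiag s, hdiag q, hsymm s r, hrq, hsq]
    rw [hqr, hqs]
    ring
  have hqvw : v ⬝ᵥ A.mulVec w = (A p r + A p s) + t * A p q := by
    rw [hv, hw]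
    simp only [Matrix.mulVec_add, dotProduct_add, add_dotProduct, hsv, happ]
    rw [hdiag q, hqr, hqs]
    ring
  have hzero : v ⬝ᵥ A.mulVec w = 0 := by
    rw [hqvw, ht]
    field_simp
    ring
  exact no_two_pos A hA hone v w (by rw [hqv]; linarith) (by rw [hqw]; linarith) hzero

section graphlemmas

variable {V : Type*} [Fintype V] [DecidableEq V] (G : SimpleGraph V)

lemma dist_le_ecc (u x : V) : G.dist u x ≤ ecc G u :=
  Finset.le_sup (Finset.mem_univ x)

lemma exists_ecc [Nonempty V] (u : V) : ∃ x, G.dist u x = ecc G u := by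
  obtain ⟨x, -, h⟩ := Finset.exists_mem_eq_sup Finset.univ Finset.univ_nonempty (G.dist u)
  exact ⟨x, h.symm⟩

lemma antiAdj_apply (u v : V) :
    antiAdj G u v = if G.dist u v = min (ecc G u) (ecc G v) then (G.dist u v : ℝ) else 0 := rfl

lemma antiAdj_diag (u : V) : antiAdj G u u = 0 := by
  rw [antiAdj_apply]
  split <;> simp [SimpleGraph.dist_self]

lemma antiAdj_symm (u v : V) : antiAdj G u v = antiAdj G v u := by
  rw [antiAdj_apply, antiAdj_apply, SimpleGraph.dist_comm, min_comm]

lemma antiAdj_eq_zero_of_dist_one (u v : V) (h2u : 2 ≤ ecc G u) (h2v : 2 ≤ ecc G v)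
    (h1 : G.dist u v = 1) : antiAdj G u v = 0 := by
  rw [antiAdj_apply, if_neg]
  rw [h1]
  omega

lemma antiAdj_of_ne_zero (u v : V) (h : antiAdj G u v ≠ 0) :
    G.dist u v = min (ecc G u) (ecc G v) ∧ G.dist u v ≠ 0 := by
  rw [antiAdj_apply] at h
  by_cases hc : G.dist u v = min (ecc G u) (ecc G v)
  · refine ⟨hc, ?_⟩
    intro h0
    rw [if_pos hc, h0] at h
    simp at h
  · rw [if_neg hc] at h
    simp at h

lemma antiAdj_pos_of_ne_zero (u v : V) (h : antiAdj G u v ≠ 0) : 0 < antiAdj G u v := by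
  obtain ⟨hc, h0⟩ := antiAdj_of_ne_zero G u v h
  rw [antiAdj_apply, if_pos hc]
  exact_mod_cast Nat.pos_of_ne_zero h0

lemma antiAdj_ecc_vtx (u x : V) (hx : G.dist u x = ecc G u) :
    antiAdj G u x = (ecc G u : ℝ) := by
  have hxu : ecc G u ≤ ecc G x := by
    rw [← hx, SimpleGraph.dist_comm]
    exact dist_le_ecc G x u
  rw [antiAdj_apply, if_pos, hx]
  rw [hx, min_eq_left hxu]

/-- Key transitivity: if `A q r = 0` and `A q s = 0` then `A r s = 0`,
otherwise we find two positive-eigenvalue directions. -/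
lemma trans_zero [Nonempty V] (hH : (antiAdj G).IsHermitian)
    (hone : (Finset.univ.filter (fun i => 0 < hH.eigenvalues i)).card ≤ 1)
    (q r s : V) (hq : 1 ≤ ecc G q)
    (h1 : antiAdj G q r = 0) (h2 : antiAdj G q s = 0) : antiAdj G r s = 0 := by
  by_contra hne
  obtain ⟨p, hp⟩ := exists_ecc G q
  have hqp : 0 < antiAdj G q p := by
    rw [antiAdj_ecc_vtx G q p hp]
    exact_mod_cast hq
  have hpq : 0 < antiAdj G p q := by rwa [← antiAdj_symm]
  exact gadget (antiAdj G) hH hone (antiAdj_diag G) (antiAdj_symm G) p q r s hpq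
    (antiAdj_pos_of_ne_zero G r s hne) h1 h2

end graphlemmas

set_option maxHeartbeats 1000000 in
/-- A connected graph with exactly one positive anti-adjacency eigenvalue contains no induced
path `P₄` on four vertices. -/
theorem no_induced_P4_of_one_positive_antiadjacency_eigenvalue
    {V : Type*} [Fintype V] [DecidableEq V] (G : SimpleGraph V) (hG : G.Connected)
    (hH : (antiAdj G).IsHermitian)
    (hone : (Finset.univ.filter (fun i => 0 < hH.eigenvalues i)).card = 1) :
    ¬ ∃ a b c d : V, a ≠ b ∧ a ≠ c ∧ a ≠ d ∧ b ≠ c ∧ b ≠ d ∧ c ≠ d ∧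
      G.Adj a b ∧ G.Adj b c ∧ G.Adj c d ∧ ¬ G.Adj a c ∧ ¬ G.Adj a d ∧ ¬ G.Adj b d := by
  rintro ⟨a, b, c, d, hab, hac, had, hbc, hbd, hcd,
    adj_ab, adj_bc, adj_cd, nadj_ac, nadj_ad, nadj_bd⟩
  haveI : Nonempty V := ⟨a⟩
  have hone' : (Finset.univ.filter (fun i => 0 < hH.eigenvalues i)).card ≤ 1 := hone.le
  -- distances within the quadruple
  have d_ab : G.dist a b = 1 := SimpleGraph.dist_eq_one_iff_adj.mpr adj_ab
  have d_bc : G.dist b c = 1 := SimpleGraph.dist_eq_one_iff_adj.mpr adj_bc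
  have d_cd : G.dist c d = 1 := SimpleGraph.dist_eq_one_iff_adj.mpr adj_cd
  have d_ac : G.dist a c = 2 := by
    have hle : G.dist a c ≤ 2 := by
      have := hG.dist_triangle (u := a) (v := b) (w := c)
      omega
    have h0 : G.dist a c ≠ 0 := (hG.pos_dist_of_ne hac).ne'
    have h1 : G.dist a c ≠ 1 := fun h => nadj_ac (SimpleGraph.dist_eq_one_iff_adj.mp h)
    omega
  have d_bd : G.dist b d = 2 := by
    have hle : G.dist b d ≤ 2 := by
      have := hG.dist_triangle (u := b) (v := c) (w := d)
      omega
    have h0 : G.dist b d ≠ 0 := (hG.pos_dist_of_ne hbd).ne'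
    have h1 : G.dist b d ≠ 1 := fun h => nadj_bd (SimpleGraph.dist_eq_one_iff_adj.mp h)
    omega
  -- eccentricity lower bounds
  have e_a2 : 2 ≤ ecc G a := d_ac ▸ dist_le_ecc G a c
  have e_b2 : 2 ≤ ecc G b := d_bd ▸ dist_le_ecc G b d
  have e_c2 : 2 ≤ ecc G c := by
    have := dist_le_ecc G c a
    rwa [SimpleGraph.dist_comm, d_ac] at this
  have e_d2 : 2 ≤ ecc G d := by
    have := dist_le_ecc G d b
    rwa [SimpleGraph.dist_comm, d_bd] at this
  -- zero entries for adjacent pairs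
  have z_ab : antiAdj G a b = 0 := antiAdj_eq_zero_of_dist_one G a b e_a2 e_b2 d_ab
  have z_bc : antiAdj G b c = 0 := antiAdj_eq_zero_of_dist_one G b c e_b2 e_c2 d_bc
  have z_cd : antiAdj G c d = 0 := antiAdj_eq_zero_of_dist_one G c d e_c2 e_d2 d_cd
  -- transitivity closes the quadruple
  have z_ba : antiAdj G b a = 0 := (antiAdj_symm G a b) ▸ z_ab
  have z_ac : antiAdj G a c = 0 :=
    trans_zero G hH hone' b a c (by omega) z_ba z_bc
  have z_bd : antiAdj G b d = 0 :=
    trans_zero G hH hone' c b d (by omega) ((antiAdj_symm G b c) ▸ z_bc) z_cd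
  have z_ad : antiAdj G a d = 0 :=
    trans_zero G hH hone' b a d (by omega) z_ba z_bd
  -- eccentricities of b and d are at least 3
  have e_b3 : 3 ≤ ecc G b ∧ 3 ≤ ecc G d := by
    have : G.dist b d ≠ min (ecc G b) (ecc G d) := by
      intro h
      have : antiAdj G b d ≠ 0 := by
        rw [antiAdj_apply, if_pos h, d_bd]
        norm_num
      exact this z_bd
    rw [d_bd] at this
    omega
  -- eccentric vertex of b
  obtain ⟨w, hw⟩ := exists_ecc G b
  have A_bw : antiAdj G b w = (ecc G b : ℝ) := antiAdj_ecc_vtx G b w hw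
  have A_bw_ne : antiAdj G b w ≠ 0 := by
    rw [A_bw]
    have : (3:ℝ) ≤ (ecc G b : ℝ) := by exact_mod_cast e_b3.1
    linarith
  -- the inductive claim along a shortest path from b to w
  have quadmem : ∀ x : V, x = a ∨ x = b ∨ x = c ∨ x = d → 2 ≤ ecc G x := by
    rintro x (rfl | rfl | rfl | rfl) <;> assumption
  have main : ∀ j : ℕ, ∀ v : V, G.dist b v = j → G.dist v w + j = ecc G b →
      ∀ x : V, (x = a ∨ x = b ∨ x = c ∨ x = d) → x ≠ v → antiAdj G v x = 0 := by
    intro j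
    induction j with
    | zero =>
      intro v hbv _ x hx hxv
      have hvb : v = b := (hG.dist_eq_zero_iff.mp hbv).symm
      subst hvb
      rcases hx with rfl | rfl | rfl | rfl
      · exact z_ba
      · exact absurd rfl hxv
      · exact z_bc
      · exact z_bd
    | succ j ih =>
      intro v hbv hvw x hx hxv
      -- find the neighbour of v towards b
      have hvb_ne : G.dist v b ≠ 0 := by
        rw [SimpleGraph.dist_comm, hbv]; omega
      obtain ⟨p, hp⟩ := SimpleGraph.exists_walk_of_dist_ne_zero hvb_ne
      rw [SimpleGraph.dist_comm, hbv] at hp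
      cases p with
      | nil =>
        have h0 : (0:ℕ) = j + 1 := by simpa using hp
        omega
      | @cons _ u _ hadj q =>
        have hqlen : q.length = j := by
          simp [SimpleGraph.Walk.length_cons] at hp
          omega
        have d_vu : G.dist v u = 1 := SimpleGraph.dist_eq_one_iff_adj.mpr hadj
        have d_uv : G.dist u v = 1 := by rw [SimpleGraph.dist_comm]; exact d_vu
        have hbu : G.dist b u = j := by
          have hle : G.dist u b ≤ j := hqlen ▸ SimpleGraph.dist_le q
          have hge : j + 1 ≤ G.dist b u + 1 := by
            have := hG.dist_triangle (u := b) (v := u) (w := v)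
            rw [hbv, d_uv] at this
            omega
          rw [SimpleGraph.dist_comm] at hle
          omega
        have huw : G.dist u w + j = ecc G b := by
          have hge : ecc G b ≤ j + G.dist u w := by
            have := hG.dist_triangle (u := b) (v := u) (w := w)
            rw [hbu, hw] at this
            omega
          have hle : G.dist u w ≤ 1 + G.dist v w := by
            have := hG.dist_triangle (u := u) (v := v) (w := w)
            rw [d_uv] at this
            omega
          omega
        -- eccentricity bounds
        have e_v2 : 2 ≤ ecc G v := by
          have h1 : G.dist v b ≤ ecc G v := dist_le_ecc G v b
          have h2 : G.dist v w ≤ ecc G v := dist_le_ecc G v w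
          rw [SimpleGraph.dist_comm, hbv] at h1
          have := e_b3.1
          omega
        have e_u2 : 2 ≤ ecc G u := by
          have h2 : G.dist u w ≤ ecc G u := dist_le_ecc G u w
          have h1 : G.dist u b ≤ ecc G u := dist_le_ecc G u b
          have d_ub : G.dist u b = j := by rw [SimpleGraph.dist_comm]; exact hbu
          have := e_b3.1
          omega
        have A_vu : antiAdj G v u = 0 := antiAdj_eq_zero_of_dist_one G v u e_v2 e_u2 d_vu
        by_cases hxu : x = u
        · rw [hxu]; exact A_vu
        · have A_ux : antiAdj G u x = 0 := by
            exact ih u hbu (by omega) x hx hxu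
          exact trans_zero G hH hone' u v x (by omega)
            ((antiAdj_symm G v u) ▸ A_vu) A_ux
  -- apply the claim to the neighbour of w towards b
  have hbw_ne : G.dist w b ≠ 0 := by
    rw [SimpleGraph.dist_comm, hw]
    omega
  obtain ⟨p, hp⟩ := SimpleGraph.exists_walk_of_dist_ne_zero hbw_ne
  rw [SimpleGraph.dist_comm, hw] at hp
  cases p with
  | nil =>
    have h0 : (0:ℕ) = ecc G b := by simpa using hp
    have := e_b3.1
    omega
  | @cons _ u _ hadj q =>
    have hqlen : q.length = ecc G b - 1 := by
      simp [SimpleGraph.Walk.length_cons] at hp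
      omega
    have d_wu : G.dist w u = 1 := SimpleGraph.dist_eq_one_iff_adj.mpr hadj
    have d_uw : G.dist u w = 1 := by rw [SimpleGraph.dist_comm]; exact d_wu
    have hbu : G.dist b u = ecc G b - 1 := by
      have hle : G.dist u b ≤ ecc G b - 1 := hqlen ▸ SimpleGraph.dist_le q
      have hge : ecc G b ≤ G.dist b u + 1 := by
        have := hG.dist_triangle (u := b) (v := u) (w := w)
        rw [d_uw, hw] at this
        omega
      rw [SimpleGraph.dist_comm] at hle
      have := e_b3.1
      omega
    have huw : G.dist u w + (ecc G b - 1) = ecc G b := by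
      rw [d_uw]
      have := e_b3.1
      omega
    have hub : u ≠ b := by
      intro h
      rw [h, SimpleGraph.dist_self] at hbu
      have := e_b3.1
      omega
    have A_ub : antiAdj G u b = 0 :=
      main (ecc G b - 1) u hbu huw b (Or.inr (Or.inl rfl)) (Ne.symm hub)
    have e_u2 : 2 ≤ ecc G u := by
      have h1 : G.dist u b ≤ ecc G u := dist_le_ecc G u b
      rw [SimpleGraph.dist_comm, hbu] at h1
      have := e_b3.1
      omega
    have e_w2 : 2 ≤ ecc G w := by
      have h1 : G.dist w b ≤ ecc G w := dist_le_ecc G w b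
      rw [SimpleGraph.dist_comm, hw] at h1
      have := e_b3.1
      omega
    have A_uw : antiAdj G u w = 0 :=
      antiAdj_eq_zero_of_dist_one G u w e_u2 e_w2 d_uw
    have : antiAdj G b w = 0 :=
      trans_zero G hH hone' u b w (by omega) A_ub A_uw
    exact A_bw_ne this
end

section
/- Let G = K_{n_0} ∨ K_{n_1,n_2} be the join of a complete graph on n_0 ≥ 1 vertices with a complete bipartite graph with parts of sizes n_1 ≥ n_2 ≥ 2, and let n = n_0 + n_1 + n_2. Then the anti-adjacency characteristic polynomial of G equals (λ+1)^{n_0−1}(λ+2)^{n−n_0−2}·f(λ), where f(λ) = (λ−n_0+1)(λ−2n_1+2)(λ−2n_2+2) − n_0 n_1(λ−2n_2+2) − n_0 n_2(λ−2n_1+2). -/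
open Matrix

variable {K : Type*} [Field K]

/-- All-ones matrix. -/
def allJ (K : Type*) [Field K] (m p : Type*) : Matrix m p K := Matrix.of fun _ _ => 1

lemma allJ_mul_allJ (m n p : Type*) [Fintype m] [Fintype n] [Fintype p] :
    (allJ K m n) * (allJ K n p) = (Fintype.card n : K) • allJ K m p := by
  ext i j
  simp [allJ, Matrix.mul_apply, Finset.card_univ]

lemma allJ_sum (m₁ m₂ p₁ p₂ : Type*) :
    (allJ K (m₁ ⊕ m₂) (p₁ ⊕ p₂)) =
      fromBlocks (allJ K m₁ p₁) (allJ K m₁ p₂) (allJ K m₂ p₁) (allJ K m₂ p₂) := by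
  ext (i|i) (j|j) <;> simp [allJ, fromBlocks]

lemma smul_one_sub_smul_allJ_mul (n : Type*) [Fintype n] [DecidableEq n]
    (a c : K) (ha : a ≠ 0) (hacn : a - c * (Fintype.card n : K) ≠ 0) :
    (a • (1 : Matrix n n K) - c • allJ K n n) *
      (a⁻¹ • ((1 : Matrix n n K) + (c * (a - c * (Fintype.card n : K))⁻¹) • allJ K n n)) = 1 := by
  set t := c * (a - c * (Fintype.card n : K))⁻¹ with ht
  have hEE := allJ_mul_allJ (K := K) n n n
  have key : (a • (1 : Matrix n n K) - c • allJ K n n) *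
      ((1 : Matrix n n K) + t • allJ K n n) =
      a • 1 + (a * t - c - c * t * (Fintype.card n : K)) • allJ K n n := by
    simp only [Matrix.sub_mul, Matrix.mul_add, Matrix.add_mul, Matrix.mul_smul, Matrix.smul_mul,
      Matrix.mul_one, Matrix.one_mul, hEE, smul_smul]
    match_scalars <;> ring
  have hz : a * t - c - c * t * (Fintype.card n : K) = 0 := by
    have h3 : t * (a - c * (Fintype.card n : K)) = c := by
      rw [ht, mul_assoc, inv_mul_cancel₀ hacn, mul_one]
    linear_combination h3
  rw [Matrix.mul_smul, key, hz, zero_smul, add_zero, smul_smul, inv_mul_cancel₀ ha, one_smul]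

lemma det_smul_one_sub_smul_allJ (n : Type*) [Fintype n] [DecidableEq n]
    (a c : K) (ha : a ≠ 0) (hn : 1 ≤ Fintype.card n) :
    (a • (1 : Matrix n n K) - c • allJ K n n).det
      = a ^ (Fintype.card n - 1) * (a - c * (Fintype.card n : K)) := by
  have h1 : a • (1 : Matrix n n K) - c • allJ K n n
      = a • ((1 : Matrix n n K) + Matrix.replicateCol Unit (fun _ : n => -(a⁻¹ * c)) * Matrix.replicateRow Unit (fun _ : n => (1:K))) := by
    ext i j
    by_cases h : i = j
    · simp [allJ, h, Matrix.mul_apply, Matrix.replicateCol_apply, Matrix.replicateRow_apply, Matrix.one_apply]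
      rw [mul_add, mul_one, mul_neg, ← mul_assoc, mul_inv_cancel₀ ha, one_mul, ← sub_eq_add_neg]
    · simp [allJ, h, Matrix.mul_apply, Matrix.replicateCol_apply, Matrix.replicateRow_apply, Matrix.one_apply]
      field_simp
  rw [h1, Matrix.det_smul, Matrix.det_one_add_replicateCol_mul_replicateRow]
  have h2 : (fun _ : n => (1:K)) ⬝ᵥ (fun _ : n => -(a⁻¹ * c)) = -(a⁻¹ * c) * (Fintype.card n : K) := by
    simp [dotProduct, Finset.card_univ, mul_comm]
  rw [h2]
  have hpow : a ^ Fintype.card n = a ^ (Fintype.card n - 1) * a := by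
    conv_lhs => rw [← Nat.sub_add_cancel hn]
    rw [pow_succ]
  rw [hpow]
  field_simp
  ring

lemma sandwich (q n p : Type*) [Fintype q] [Fintype n] [Fintype p] [DecidableEq n]
    (a t u v : K) :
    (u • allJ K q n) * (a⁻¹ • ((1 : Matrix n n K) + t • allJ K n n)) * (v • allJ K n p) =
      (u * v * (a⁻¹ * ((Fintype.card n : K) + t * (Fintype.card n : K) * (Fintype.card n : K)))) •
        allJ K q p := by
  have h1 : (allJ K q n) * ((1 : Matrix n n K) + t • allJ K n n) * (allJ K n p)
      = ((Fintype.card n : K) + t * (Fintype.card n : K) * (Fintype.card n : K)) • allJ K q p := by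
    simp only [Matrix.mul_add, Matrix.add_mul, Matrix.mul_one, Matrix.one_mul, Matrix.mul_smul,
      Matrix.smul_mul, allJ_mul_allJ, smul_smul]
    match_scalars <;> ring
  simp only [Matrix.smul_mul, Matrix.mul_smul, smul_smul, h1]
  congr 1
  ring

lemma fromBlocks_det_eq (n₀ n₁ n₂ : ℕ) (hn₀ : 1 ≤ n₀) (hn₁ : 1 ≤ n₁) (hn₂ : 1 ≤ n₂) (x : K)
    (ha : x + 1 ≠ 0) (hb : x + 2 ≠ 0) (han : x + 1 - (n₀ : K) ≠ 0)
    (hbc : x + 2 - (2 + (n₀ : K) * (x + 1 - (n₀ : K))⁻¹) * (n₁ : K) ≠ 0) :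
    (fromBlocks ((x+1) • (1 : Matrix (Fin n₀) (Fin n₀) K) - (1:K) • allJ K (Fin n₀) (Fin n₀))
        (-allJ K (Fin n₀) (Fin n₁ ⊕ Fin n₂))
        (-allJ K (Fin n₁ ⊕ Fin n₂) (Fin n₀))
        (fromBlocks ((x+2) • (1 : Matrix (Fin n₁) (Fin n₁) K) - (2:K) • allJ K (Fin n₁) (Fin n₁)) 0 0
            ((x+2) • (1 : Matrix (Fin n₂) (Fin n₂) K) - (2:K) • allJ K (Fin n₂) (Fin n₂)))).det
    = ((x+1) ^ (n₀ - 1) * ((x+1) - (n₀:K))) *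
      (((x+2) ^ (n₁ - 1) * ((x+2) - (2 + (n₀ : K) * (x + 1 - (n₀ : K))⁻¹) * (n₁:K))) *
       ((x+2) ^ (n₂ - 1) * ((x+2) -
          ((2 + (n₀ : K) * (x + 1 - (n₀ : K))⁻¹)
            + ((n₀ : K) * (x + 1 - (n₀ : K))⁻¹)^2 * (n₁:K)
              * ((x+2) - (2 + (n₀ : K) * (x + 1 - (n₀ : K))⁻¹) * (n₁ : K))⁻¹) * (n₂:K)))) := by
  have cardn₀ : (Fintype.card (Fin n₀) : K) = (n₀ : K) := by simp
  have cardn₁ : (Fintype.card (Fin n₁) : K) = (n₁ : K) := by simp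
  have cardn₂ : (Fintype.card (Fin n₂) : K) = (n₂ : K) := by simp
  set s₀ : K := (n₀ : K) * (x + 1 - (n₀ : K))⁻¹ with hs₀
  set c₁ : K := 2 + s₀ with hc₁
  set c₂ : K := c₁ + s₀^2 * (n₁:K) * ((x+2) - c₁ * (n₁ : K))⁻¹ with hc₂
  -- level 1 inverse
  have han' : (x+1) - (1:K) * (Fintype.card (Fin n₀) : K) ≠ 0 := by
    rw [cardn₀, one_mul]; exact han
  have hinv₀ := smul_one_sub_smul_allJ_mul (K := K) (Fin n₀) (x+1) 1 ha han'
  letI : Invertible ((x+1) • (1 : Matrix (Fin n₀) (Fin n₀) K) - (1:K) • allJ K (Fin n₀) (Fin n₀)) :=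
    invertibleOfRightInverse _ _ hinv₀
  have hiA₀ := invOf_eq_right_inv hinv₀
  rw [Matrix.det_fromBlocks₁₁, hiA₀]
  -- the sandwich at level 1
  have hC : (-allJ K (Fin n₁ ⊕ Fin n₂) (Fin n₀)) = (-1 : K) • allJ K (Fin n₁ ⊕ Fin n₂) (Fin n₀) := by
    rw [neg_one_smul]
  have hB : (-allJ K (Fin n₀) (Fin n₁ ⊕ Fin n₂)) = (-1 : K) • allJ K (Fin n₀) (Fin n₁ ⊕ Fin n₂) := by
    rw [neg_one_smul]
  rw [hC, hB, sandwich]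
  have hscal : ((-1 : K) * (-1) * ((x+1)⁻¹ * ((Fintype.card (Fin n₀) : K) +
      1 * ((x+1) - 1*(Fintype.card (Fin n₀) : K))⁻¹ * (Fintype.card (Fin n₀) : K) * (Fintype.card (Fin n₀) : K)))) = s₀ := by
    rw [cardn₀, one_mul, hs₀]
    field_simp
    ring
  rw [hscal]
  -- rewrite the Schur complement at level 1 as fromBlocks
  have hJsum : allJ K (Fin n₁ ⊕ Fin n₂) (Fin n₁ ⊕ Fin n₂) =
      fromBlocks (allJ K (Fin n₁) (Fin n₁)) (allJ K (Fin n₁) (Fin n₂))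
        (allJ K (Fin n₂) (Fin n₁)) (allJ K (Fin n₂) (Fin n₂)) := allJ_sum _ _ _ _
  have hW : (fromBlocks ((x+2) • (1 : Matrix (Fin n₁) (Fin n₁) K) - (2:K) • allJ K (Fin n₁) (Fin n₁)) 0 0
        ((x+2) • (1 : Matrix (Fin n₂) (Fin n₂) K) - (2:K) • allJ K (Fin n₂) (Fin n₂)))
      - s₀ • allJ K (Fin n₁ ⊕ Fin n₂) (Fin n₁ ⊕ Fin n₂)
      = fromBlocks ((x+2) • (1 : Matrix (Fin n₁) (Fin n₁) K) - c₁ • allJ K (Fin n₁) (Fin n₁))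
          ((-s₀) • allJ K (Fin n₁) (Fin n₂)) ((-s₀) • allJ K (Fin n₂) (Fin n₁))
          ((x+2) • (1 : Matrix (Fin n₂) (Fin n₂) K) - c₁ • allJ K (Fin n₂) (Fin n₂)) := by
    ext (i|i) (j|j) <;>
      simp [allJ, fromBlocks, hc₁, Matrix.smul_apply, Matrix.one_apply, Matrix.sub_apply] <;>
      ring
  rw [hW]
  -- level 2
  have hbc' : (x+2) - c₁ * (Fintype.card (Fin n₁) : K) ≠ 0 := by
    rw [cardn₁]; exact hbc
  have hinv₁ := smul_one_sub_smul_allJ_mul (K := K) (Fin n₁) (x+2) c₁ hb hbc'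
  letI : Invertible ((x+2) • (1 : Matrix (Fin n₁) (Fin n₁) K) - c₁ • allJ K (Fin n₁) (Fin n₁)) :=
    invertibleOfRightInverse _ _ hinv₁
  have hiA₁ := invOf_eq_right_inv hinv₁
  rw [Matrix.det_fromBlocks₁₁, hiA₁, sandwich]
  have hscal₂ : ((-s₀) * (-s₀) * ((x+2)⁻¹ * ((Fintype.card (Fin n₁) : K) +
      c₁ * ((x+2) - c₁*(Fintype.card (Fin n₁) : K))⁻¹ * (Fintype.card (Fin n₁) : K) * (Fintype.card (Fin n₁) : K))))
      = s₀^2 * (n₁:K) * ((x+2) - c₁ * (n₁ : K))⁻¹ := by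
    rw [cardn₁]
    linear_combination (-(s₀^2*(n₁:K)*(x+2)⁻¹)) * mul_inv_cancel₀ hbc + (s₀^2*(n₁:K)*(x+2-c₁*(n₁:K))⁻¹) * mul_inv_cancel₀ hb
  rw [hscal₂]
  have hW₂ : ((x+2) • (1 : Matrix (Fin n₂) (Fin n₂) K) - c₁ • allJ K (Fin n₂) (Fin n₂))
      - (s₀^2 * (n₁:K) * ((x+2) - c₁ * (n₁ : K))⁻¹) • allJ K (Fin n₂) (Fin n₂)
      = ((x+2) • (1 : Matrix (Fin n₂) (Fin n₂) K) - c₂ • allJ K (Fin n₂) (Fin n₂)) := by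
    rw [hc₂, sub_sub]
    congr 1
    exact (add_smul _ _ _).symm
  rw [hW₂]
  -- compute the three determinants
  rw [det_smul_one_sub_smul_allJ (Fin n₀) (x+1) 1 ha (by simpa using hn₀),
    det_smul_one_sub_smul_allJ (Fin n₁) (x+2) c₁ hb (by simpa using hn₁),
    det_smul_one_sub_smul_allJ (Fin n₂) (x+2) c₂ hb (by simpa using hn₂)]
  simp only [Fintype.card_fin, one_mul]

section Graph
open SimpleGraph

variable {n₀ n₁ n₂ : ℕ} (hn₀ : 1 ≤ n₀) (hn₁₂ : n₂ ≤ n₁) (hn₂ : 2 ≤ n₂)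
  (G : SimpleGraph (Fin n₀ ⊕ (Fin n₁ ⊕ Fin n₂)))
  (hGadj : ∀ u v, G.Adj u v ↔ u ≠ v ∧
      (u.isLeft = true ∨ v.isLeft = true ∨
        (∃ a b, u = Sum.inr (Sum.inl a) ∧ v = Sum.inr (Sum.inr b)) ∨
        (∃ a b, u = Sum.inr (Sum.inr a) ∧ v = Sum.inr (Sum.inl b))))

include hGadj

lemma adj_of_left (u v : Fin n₀ ⊕ (Fin n₁ ⊕ Fin n₂)) (h : u ≠ v)
    (h2 : u.isLeft = true ∨ v.isLeft = true) : G.Adj u v :=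
  (hGadj u v).mpr ⟨h, by tauto⟩

include hn₀

lemma dist_two_of_not_adj (u v : Fin n₀ ⊕ (Fin n₁ ⊕ Fin n₂)) (hne : u ≠ v)
    (hnadj : ¬ G.Adj u v) : G.dist u v = 2 := by
  set w₀ : Fin n₀ ⊕ (Fin n₁ ⊕ Fin n₂) := Sum.inl ⟨0, hn₀⟩ with hw₀
  have hu : u ≠ w₀ := by
    rintro rfl; exact hnadj (adj_of_left G hGadj _ _ hne (by simp [hw₀]))
  have hv : w₀ ≠ v := by
    rintro rfl; exact hnadj (adj_of_left G hGadj _ _ hne (by simp [hw₀]))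
  have h1 : G.Adj u w₀ := adj_of_left G hGadj _ _ hu (by simp [hw₀])
  have h2 : G.Adj w₀ v := adj_of_left G hGadj _ _ hv (by simp [hw₀])
  have hle : G.dist u v ≤ 2 := by
    simpa using SimpleGraph.dist_le (Walk.cons h1 (Walk.cons h2 Walk.nil))
  have hpos : 0 < G.dist u v :=
    Reachable.pos_dist_of_ne (Walk.cons h1 (Walk.cons h2 Walk.nil)).reachable hne
  have hne1 : G.dist u v ≠ 1 := fun h => hnadj (dist_eq_one_iff_adj.mp h)
  omega

include hn₁₂ hn₂

lemma ecc_left (i : Fin n₀) : ecc G (Sum.inl i) = 1 := by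
  apply le_antisymm
  · apply Finset.sup_le
    intro v _
    by_cases h : Sum.inl i = v
    · simp [← h, SimpleGraph.dist_self]
    · rw [dist_eq_one_iff_adj.mpr (adj_of_left G hGadj _ _ h (by simp))]
  · have h1 : G.dist (Sum.inl i) (Sum.inr (Sum.inl ⟨0, by omega⟩)) = 1 :=
      dist_eq_one_iff_adj.mpr (adj_of_left G hGadj _ _ (by simp) (by simp))
    calc (1:ℕ) = G.dist (Sum.inl i) (Sum.inr (Sum.inl ⟨0, by omega⟩)) := h1.symm
      _ ≤ _ := Finset.le_sup (Finset.mem_univ _)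

lemma ecc_right (x : Fin n₁ ⊕ Fin n₂) : ecc G (Sum.inr x) = 2 := by
  apply le_antisymm
  · apply Finset.sup_le
    intro v _
    by_cases h : Sum.inr x = v
    · simp [← h, SimpleGraph.dist_self]
    · by_cases h2 : G.Adj (Sum.inr x) v
      · rw [dist_eq_one_iff_adj.mpr h2]; omega
      · rw [dist_two_of_not_adj hn₀ G hGadj _ _ h h2]
  · rcases x with a | a
    · obtain ⟨b, hb⟩ := Fintype.exists_ne_of_one_lt_card (by simp; omega) a
      have hne : (Sum.inr (Sum.inl a) : Fin n₀ ⊕ (Fin n₁ ⊕ Fin n₂)) ≠ Sum.inr (Sum.inl b) := by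
        simp [(Ne.symm hb)]
      have hnadj : ¬ G.Adj (Sum.inr (Sum.inl a)) (Sum.inr (Sum.inl b)) := by
        simp [hGadj]
      have h2 : G.dist (Sum.inr (Sum.inl a)) (Sum.inr (Sum.inl b)) = 2 :=
        dist_two_of_not_adj hn₀ G hGadj _ _ hne hnadj
      calc (2:ℕ) = G.dist (Sum.inr (Sum.inl a)) (Sum.inr (Sum.inl b)) := h2.symm
        _ ≤ _ := Finset.le_sup (Finset.mem_univ _)
    · obtain ⟨b, hb⟩ := Fintype.exists_ne_of_one_lt_card (by simp; omega) a
      have hne : (Sum.inr (Sum.inr a) : Fin n₀ ⊕ (Fin n₁ ⊕ Fin n₂)) ≠ Sum.inr (Sum.inr b) := by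
        simp [(Ne.symm hb)]
      have hnadj : ¬ G.Adj (Sum.inr (Sum.inr a)) (Sum.inr (Sum.inr b)) := by
        simp [hGadj]
      have h2 : G.dist (Sum.inr (Sum.inr a)) (Sum.inr (Sum.inr b)) = 2 :=
        dist_two_of_not_adj hn₀ G hGadj _ _ hne hnadj
      calc (2:ℕ) = G.dist (Sum.inr (Sum.inr a)) (Sum.inr (Sum.inr b)) := h2.symm
        _ ≤ _ := Finset.le_sup (Finset.mem_univ _)

lemma antiAdj_ll (i j : Fin n₀) :
    antiAdj G (Sum.inl i) (Sum.inl j) = if i = j then 0 else 1 := by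
  by_cases h : i = j
  · subst h
    simp [antiAdj, SimpleGraph.dist_self, ecc_left hn₀ hn₁₂ hn₂ G hGadj]
  · have hne : (Sum.inl i : Fin n₀ ⊕ (Fin n₁ ⊕ Fin n₂)) ≠ Sum.inl j := by simp [h]
    have hd : G.dist (Sum.inl i) (Sum.inl j) = 1 :=
      dist_eq_one_iff_adj.mpr (adj_of_left G hGadj _ _ hne (by simp))
    simp [antiAdj, hd, ecc_left hn₀ hn₁₂ hn₂ G hGadj, h]

lemma antiAdj_lr (i : Fin n₀) (y : Fin n₁ ⊕ Fin n₂) :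
    antiAdj G (Sum.inl i) (Sum.inr y) = 1 := by
  have hd : G.dist (Sum.inl i) (Sum.inr y) = 1 :=
    dist_eq_one_iff_adj.mpr (adj_of_left G hGadj _ _ (by simp) (by simp))
  simp [antiAdj, hd, ecc_left hn₀ hn₁₂ hn₂ G hGadj, ecc_right hn₀ hn₁₂ hn₂ G hGadj]

lemma antiAdj_rl (y : Fin n₁ ⊕ Fin n₂) (i : Fin n₀) :
    antiAdj G (Sum.inr y) (Sum.inl i) = 1 := by
  have hd : G.dist (Sum.inr y) (Sum.inl i) = 1 :=
    dist_eq_one_iff_adj.mpr (adj_of_left G hGadj _ _ (by simp) (by simp))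
  simp [antiAdj, hd, ecc_left hn₀ hn₁₂ hn₂ G hGadj, ecc_right hn₀ hn₁₂ hn₂ G hGadj]

lemma antiAdj_rr11 (a b : Fin n₁) :
    antiAdj G (Sum.inr (Sum.inl a)) (Sum.inr (Sum.inl b)) = if a = b then 0 else 2 := by
  by_cases h : a = b
  · subst h
    simp [antiAdj, SimpleGraph.dist_self, ecc_right hn₀ hn₁₂ hn₂ G hGadj]
  · have hne : (Sum.inr (Sum.inl a) : Fin n₀ ⊕ (Fin n₁ ⊕ Fin n₂)) ≠ Sum.inr (Sum.inl b) := by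
      simp [h]
    have hd : G.dist (Sum.inr (Sum.inl a)) (Sum.inr (Sum.inl b)) = 2 :=
      dist_two_of_not_adj hn₀ G hGadj _ _ hne (by simp [hGadj])
    simp [antiAdj, hd, ecc_right hn₀ hn₁₂ hn₂ G hGadj, h]

lemma antiAdj_rr22 (a b : Fin n₂) :
    antiAdj G (Sum.inr (Sum.inr a)) (Sum.inr (Sum.inr b)) = if a = b then 0 else 2 := by
  by_cases h : a = b
  · subst h
    simp [antiAdj, SimpleGraph.dist_self, ecc_right hn₀ hn₁₂ hn₂ G hGadj]
  · have hne : (Sum.inr (Sum.inr a) : Fin n₀ ⊕ (Fin n₁ ⊕ Fin n₂)) ≠ Sum.inr (Sum.inr b) := by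
      simp [h]
    have hd : G.dist (Sum.inr (Sum.inr a)) (Sum.inr (Sum.inr b)) = 2 :=
      dist_two_of_not_adj hn₀ G hGadj _ _ hne (by simp [hGadj])
    simp [antiAdj, hd, ecc_right hn₀ hn₁₂ hn₂ G hGadj, h]

lemma antiAdj_rr12 (a : Fin n₁) (b : Fin n₂) :
    antiAdj G (Sum.inr (Sum.inl a)) (Sum.inr (Sum.inr b)) = 0 := by
  have hd : G.dist (Sum.inr (Sum.inl a)) (Sum.inr (Sum.inr b)) = 1 :=
    dist_eq_one_iff_adj.mpr ((hGadj _ _).mpr ⟨by simp, Or.inr (Or.inr (Or.inl ⟨a, b, rfl, rfl⟩))⟩)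
  simp [antiAdj, hd, ecc_right hn₀ hn₁₂ hn₂ G hGadj]

lemma antiAdj_rr21 (a : Fin n₂) (b : Fin n₁) :
    antiAdj G (Sum.inr (Sum.inr a)) (Sum.inr (Sum.inl b)) = 0 := by
  have hd : G.dist (Sum.inr (Sum.inr a)) (Sum.inr (Sum.inl b)) = 1 :=
    dist_eq_one_iff_adj.mpr ((hGadj _ _).mpr ⟨by simp, Or.inr (Or.inr (Or.inr ⟨a, b, rfl, rfl⟩))⟩)
  simp [antiAdj, hd, ecc_right hn₀ hn₁₂ hn₂ G hGadj]

end Graph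


set_option maxHeartbeats 1600000 in
open Polynomial in
/-- For `G = K_{n₀} ∨ K_{n₁,n₂}` (the join of a complete graph on `n₀ ≥ 1` vertices with a
complete bipartite graph with parts of sizes `n₁ ≥ n₂ ≥ 2`), the anti-adjacency
characteristic polynomial of `G` is
`(λ+1)^{n₀−1} (λ+2)^{n−n₀−2} ((λ−n₀+1)(λ−2n₁+2)(λ−2n₂+2) − n₀n₁(λ−2n₂+2) − n₀n₂(λ−2n₁+2))`,
where `n = n₀ + n₁ + n₂` (so `n − n₀ − 2 = n₁ + n₂ − 2`). -/
theorem antiAdj_charpoly_join_complete_completeBipartite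
    {n₀ n₁ n₂ : ℕ} (hn₀ : 1 ≤ n₀) (hn₁₂ : n₂ ≤ n₁) (hn₂ : 2 ≤ n₂)
    (G : SimpleGraph (Fin n₀ ⊕ (Fin n₁ ⊕ Fin n₂)))
    (hGadj : ∀ u v, G.Adj u v ↔ u ≠ v ∧
      (u.isLeft = true ∨ v.isLeft = true ∨
        (∃ a b, u = Sum.inr (Sum.inl a) ∧ v = Sum.inr (Sum.inr b)) ∨
        (∃ a b, u = Sum.inr (Sum.inr a) ∧ v = Sum.inr (Sum.inl b)))) :
    (antiAdj G).charpoly =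
      (X + C 1) ^ (n₀ - 1) * (X + C 2) ^ (n₁ + n₂ - 2) *
        ((X - C ((n₀ : ℝ) - 1)) * (X - C (2 * (n₁ : ℝ) - 2)) * (X - C (2 * (n₂ : ℝ) - 2)) -
          C ((n₀ : ℝ) * n₁) * (X - C (2 * (n₂ : ℝ) - 2)) -
          C ((n₀ : ℝ) * n₂) * (X - C (2 * (n₁ : ℝ) - 2))) := by
  classical
  set K := FractionRing (Polynomial ℝ) with hK
  let φ : Polynomial ℝ →+* K := (algebraMap (Polynomial ℝ) K : Polynomial ℝ →+* K)
  have hinj : Function.Injective φ := IsFractionRing.injective _ _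
  have hC2 : (Polynomial.C (2:ℝ)) = 2 := map_ofNat _ 2
  have hmapne : ∀ p : Polynomial ℝ, p ≠ 0 → φ p ≠ 0 := by
    intro p hp h
    exact hp (hinj (by simpa using h))
  have ha : φ X + 1 ≠ 0 := by
    have h1 : φ X + 1 = φ (X + C 1) := by
      rw [_root_.map_add, Polynomial.C_1, _root_.map_one]
    rw [h1]
    exact hmapne _ (X_add_C_ne_zero 1)
  have hb : φ X + 2 ≠ 0 := by
    have h1 : φ X + 2 = φ (X + C 2) := by
      rw [_root_.map_add, hC2, map_ofNat]
    rw [h1]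
    exact hmapne _ (X_add_C_ne_zero 2)
  have han : φ X + 1 - (n₀ : K) ≠ 0 := by
    have h1 : φ X + 1 - (n₀ : K) = φ (X + C (1 - (n₀:ℝ))) := by
      rw [_root_.map_add, _root_.map_sub, Polynomial.C_1, map_natCast, _root_.map_sub,
        _root_.map_one, map_natCast]
      ring
    rw [h1]
    exact hmapne _ (X_add_C_ne_zero _)
  have hq : ((X + C (2 - 2*(n₁:ℝ))) * (X + C (1 - (n₀:ℝ))) - C ((n₀:ℝ)*(n₁:ℝ)) : Polynomial ℝ) ≠ 0 := by
    intro h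
    have h2 : ((X + C (2 - 2*(n₁:ℝ))) * (X + C (1 - (n₀:ℝ))) : Polynomial ℝ) = C ((n₀:ℝ)*(n₁:ℝ)) :=
      sub_eq_zero.mp h
    have h3 := congrArg Polynomial.natDegree h2
    rw [Polynomial.natDegree_mul (X_add_C_ne_zero _) (X_add_C_ne_zero _),
      Polynomial.natDegree_X_add_C, Polynomial.natDegree_X_add_C, Polynomial.natDegree_C] at h3
    omega
  have hfac : (φ X + 2 - (2 + (n₀:K) * (φ X + 1 - (n₀:K))⁻¹) * (n₁:K)) * (φ X + 1 - (n₀:K))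
      = φ ((X + C (2 - 2*(n₁:ℝ))) * (X + C (1 - (n₀:ℝ))) - C ((n₀:ℝ)*(n₁:ℝ))) := by
    simp only [_root_.map_sub, _root_.map_add, _root_.map_mul, _root_.map_one, map_natCast,
      map_ofNat]
    linear_combination (-((n₀:K)*(n₁:K))) * inv_mul_cancel₀ han
  have hbc : φ X + 2 - (2 + (n₀:K) * (φ X + 1 - (n₀:K))⁻¹) * (n₁:K) ≠ 0 := by
    intro h
    apply hmapne _ hq
    rw [← hfac, h, zero_mul]
  have key : (Matrix.charmatrix (antiAdj G)).map φ =
      Matrix.fromBlocks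
        ((φ X + 1) • (1 : Matrix (Fin n₀) (Fin n₀) K) - (1:K) • allJ K (Fin n₀) (Fin n₀))
        (-allJ K (Fin n₀) (Fin n₁ ⊕ Fin n₂))
        (-allJ K (Fin n₁ ⊕ Fin n₂) (Fin n₀))
        (Matrix.fromBlocks
          ((φ X + 2) • (1 : Matrix (Fin n₁) (Fin n₁) K) - (2:K) • allJ K (Fin n₁) (Fin n₁)) 0 0
          ((φ X + 2) • (1 : Matrix (Fin n₂) (Fin n₂) K) - (2:K) • allJ K (Fin n₂) (Fin n₂))) := by
    ext u v
    rcases u with i | (a | a) <;> rcases v with j | (b | b)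
    · by_cases h : i = j
      · subst h
        rw [Matrix.map_apply, Matrix.charmatrix_apply_eq,
          antiAdj_ll hn₀ hn₁₂ hn₂ G hGadj]
        simp only [eq_self_iff_true, if_true, Matrix.fromBlocks_apply₁₁, Matrix.sub_apply, Matrix.smul_apply,
          Matrix.one_apply_eq, allJ, Matrix.of_apply, smul_eq_mul, _root_.map_sub, map_zero,
          Polynomial.C_0]
        ring
      · rw [Matrix.map_apply, Matrix.charmatrix_apply_ne _ _ _ (by simp [h]),
          antiAdj_ll hn₀ hn₁₂ hn₂ G hGadj]
        simp only [if_neg h, Matrix.fromBlocks_apply₁₁, Matrix.sub_apply, Matrix.smul_apply,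
          Matrix.one_apply_ne h, allJ, Matrix.of_apply, smul_eq_mul, _root_.map_neg,
          Polynomial.C_1, _root_.map_one]
        ring
    · rw [Matrix.map_apply, Matrix.charmatrix_apply_ne _ _ _ (by simp),
        antiAdj_lr hn₀ hn₁₂ hn₂ G hGadj]
      simp only [Matrix.fromBlocks_apply₁₂, Matrix.neg_apply, allJ, Matrix.of_apply,
        _root_.map_neg, Polynomial.C_1, _root_.map_one]
    · rw [Matrix.map_apply, Matrix.charmatrix_apply_ne _ _ _ (by simp),
        antiAdj_lr hn₀ hn₁₂ hn₂ G hGadj]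
      simp only [Matrix.fromBlocks_apply₁₂, Matrix.neg_apply, allJ, Matrix.of_apply,
        _root_.map_neg, Polynomial.C_1, _root_.map_one]
    · rw [Matrix.map_apply, Matrix.charmatrix_apply_ne _ _ _ (by simp),
        antiAdj_rl hn₀ hn₁₂ hn₂ G hGadj]
      simp only [Matrix.fromBlocks_apply₂₁, Matrix.neg_apply, allJ, Matrix.of_apply,
        _root_.map_neg, Polynomial.C_1, _root_.map_one]
    · by_cases h : a = b
      · subst h
        rw [Matrix.map_apply, Matrix.charmatrix_apply_eq,
          antiAdj_rr11 hn₀ hn₁₂ hn₂ G hGadj]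
        simp only [eq_self_iff_true, if_true, Matrix.fromBlocks_apply₂₂, Matrix.fromBlocks_apply₁₁,
          Matrix.sub_apply, Matrix.smul_apply, Matrix.one_apply_eq, allJ, Matrix.of_apply,
          smul_eq_mul, _root_.map_sub, map_zero, Polynomial.C_0]
        ring
      · rw [Matrix.map_apply, Matrix.charmatrix_apply_ne _ _ _ (by simp [h]),
          antiAdj_rr11 hn₀ hn₁₂ hn₂ G hGadj]
        simp only [if_neg h, Matrix.fromBlocks_apply₂₂, Matrix.fromBlocks_apply₁₁,
          Matrix.sub_apply, Matrix.smul_apply, Matrix.one_apply_ne h, allJ, Matrix.of_apply,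
          smul_eq_mul, _root_.map_neg, hC2, map_ofNat]
        ring
    · rw [Matrix.map_apply, Matrix.charmatrix_apply_ne _ _ _ (by simp),
        antiAdj_rr12 hn₀ hn₁₂ hn₂ G hGadj]
      simp only [Matrix.fromBlocks_apply₂₂, Matrix.fromBlocks_apply₁₂, Matrix.zero_apply,
        Polynomial.C_0, neg_zero, map_zero]
    · rw [Matrix.map_apply, Matrix.charmatrix_apply_ne _ _ _ (by simp),
        antiAdj_rl hn₀ hn₁₂ hn₂ G hGadj]
      simp only [Matrix.fromBlocks_apply₂₁, Matrix.neg_apply, allJ, Matrix.of_apply,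
        _root_.map_neg, Polynomial.C_1, _root_.map_one]
    · rw [Matrix.map_apply, Matrix.charmatrix_apply_ne _ _ _ (by simp),
        antiAdj_rr21 hn₀ hn₁₂ hn₂ G hGadj]
      simp only [Matrix.fromBlocks_apply₂₂, Matrix.fromBlocks_apply₂₁, Matrix.zero_apply,
        Polynomial.C_0, neg_zero, map_zero]
    · by_cases h : a = b
      · subst h
        rw [Matrix.map_apply, Matrix.charmatrix_apply_eq,
          antiAdj_rr22 hn₀ hn₁₂ hn₂ G hGadj]
        simp only [eq_self_iff_true, if_true, Matrix.fromBlocks_apply₂₂, Matrix.sub_apply, Matrix.smul_apply,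
          Matrix.one_apply_eq, allJ, Matrix.of_apply, smul_eq_mul, _root_.map_sub, map_zero,
          Polynomial.C_0]
        ring
      · rw [Matrix.map_apply, Matrix.charmatrix_apply_ne _ _ _ (by simp [h]),
          antiAdj_rr22 hn₀ hn₁₂ hn₂ G hGadj]
        simp only [if_neg h, Matrix.fromBlocks_apply₂₂, Matrix.sub_apply, Matrix.smul_apply,
          Matrix.one_apply_ne h, allJ, Matrix.of_apply, smul_eq_mul, _root_.map_neg, hC2,
          map_ofNat]
        ring
  apply hinj
  show φ _ = φ _
  have hdet : φ ((antiAdj G).charpoly) = ((Matrix.charmatrix (antiAdj G)).map φ).det :=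
    RingHom.map_det φ _
  rw [hdet, key,
    fromBlocks_det_eq n₀ n₁ n₂ hn₀ (by omega) (by omega) (φ X) ha hb han hbc]
  have hexp : n₁ + n₂ - 2 = (n₁ - 1) + (n₂ - 1) := by omega
  simp only [_root_.map_mul, map_pow, _root_.map_add, _root_.map_sub, _root_.map_one,
    map_natCast, map_ofNat, Polynomial.C_1, hC2, hexp, pow_add]
  have R0 : (n₀:K) * (φ X + 1 - (n₀:K))⁻¹ * (φ X + 1 - (n₀:K)) = (n₀:K) := by
    rw [mul_assoc, inv_mul_cancel₀ han, mul_one]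
  have R1 : (φ X + 2 - (2 + (n₀:K) * (φ X + 1 - (n₀:K))⁻¹) * (n₁:K))⁻¹ *
      (φ X + 2 - (2 + (n₀:K) * (φ X + 1 - (n₀:K))⁻¹) * (n₁:K)) = 1 := inv_mul_cancel₀ hbc
  have hcore : (φ X + 1 - (n₀:K)) *
      ((φ X + 2 - (2 + (n₀:K) * (φ X + 1 - (n₀:K))⁻¹) * (n₁:K)) *
       (φ X + 2 - ((2 + (n₀:K) * (φ X + 1 - (n₀:K))⁻¹) +
          ((n₀:K) * (φ X + 1 - (n₀:K))⁻¹)^2 * (n₁:K) *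
          (φ X + 2 - (2 + (n₀:K) * (φ X + 1 - (n₀:K))⁻¹) * (n₁:K))⁻¹) * (n₂:K)))
      = (φ X - ((n₀:K) - 1)) * (φ X - (2*(n₁:K) - 2)) * (φ X - (2*(n₂:K) - 2))
        - (n₀:K)*(n₁:K) * (φ X - (2*(n₂:K) - 2)) - (n₀:K)*(n₂:K) * (φ X - (2*(n₁:K) - 2)) := by
    linear_combination (-((n₂:K)*(φ X + 2 - 2*(n₁:K)) + (n₁:K)*(φ X + 2 - 2*(n₂:K)))) * R0
      + (-((φ X + 1 - (n₀:K)) * ((n₀:K) * (φ X + 1 - (n₀:K))⁻¹)^2 * (n₁:K) * (n₂:K))) * R1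
  linear_combination ((φ X + 1)^(n₀-1) * ((φ X + 2)^(n₁-1) * (φ X + 2)^(n₂-1))) * hcore
end

section
/- Let G = K_1 ∨ K_{n_1,n_2,n_3} with n_1 ≥ n_2 ≥ n_3 ≥ 2. Then G has at least three anti-adjacency eigenvalues strictly greater than 0; more precisely, ξ_1 ≥ 2n_1 − 2, ξ_2 ≥ 2n_2 − 2, and ξ_3 ≥ 2n_3 − 2, where ξ_1 ≥ ξ_2 ≥ ξ_3 are the three largest anti-adjacency eigenvalues. -/
section AuxLemmas
open Matrix

open Matrix
open scoped RealInnerProductSpace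

lemma sum_dotProduct' {V ι : Type*} [Fintype V] (s : Finset ι) (f : ι → V → ℝ) (w : V → ℝ) :
    (∑ v ∈ s, f v) ⬝ᵥ w = ∑ v ∈ s, (f v) ⬝ᵥ w := by
  simp only [dotProduct, Finset.sum_apply, Finset.sum_mul]
  exact Finset.sum_comm

lemma dotProduct_sum' {V ι : Type*} [Fintype V] (s : Finset ι) (f : ι → V → ℝ) (w : V → ℝ) :
    w ⬝ᵥ (∑ v ∈ s, f v) = ∑ v ∈ s, w ⬝ᵥ f v := by
  simp only [dotProduct, Finset.sum_apply, Finset.mul_sum]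
  exact Finset.sum_comm

lemma mulVec_sum' {V ι : Type*} [Fintype V] (s : Finset ι) (A : Matrix V V ℝ) (f : ι → V → ℝ) :
    A *ᵥ (∑ v ∈ s, f v) = ∑ v ∈ s, A *ᵥ f v := by
  rw [← Matrix.mulVecLin_apply, map_sum]
  simp [Matrix.mulVecLin_apply]

lemma key_count {V : Type*} [Fintype V] [DecidableEq V] {A : Matrix V V ℝ} (hA : A.IsHermitian)
    {k : ℕ} (x : Fin k → V → ℝ) (c : ℝ)
    (hq : ∀ a : Fin k → ℝ, a ≠ 0 →
      0 < (∑ j, a j • x j) ⬝ᵥ (∑ j, a j • x j) ∧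
        c * ((∑ j, a j • x j) ⬝ᵥ (∑ j, a j • x j))
          ≤ (∑ j, a j • x j) ⬝ᵥ (A *ᵥ (∑ j, a j • x j))) :
    k ≤ (Finset.univ.filter (fun v => c ≤ hA.eigenvalues v)).card := by
  classical
  by_contra hlt
  push_neg at hlt
  set e := hA.eigenvectorBasis with he
  set S := Finset.univ.filter (fun v => c ≤ hA.eigenvalues v) with hS
  let φ : (Fin k → ℝ) →ₗ[ℝ] (S → ℝ) :=
    { toFun := fun a s => (⇑(e s.1)) ⬝ᵥ (∑ j, a j • x j)
      map_add' := by
        intro a b; funext s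
        simp [add_smul, Finset.sum_add_distrib, dotProduct_add]
      map_smul' := by
        intro r a; funext s
        simp [mul_smul, ← Finset.smul_sum, dotProduct_smul] }
  have hni : ¬ Function.Injective φ := by
    intro hinj
    have h1 := LinearMap.finrank_le_finrank_of_injective hinj
    have h2 : Module.finrank ℝ (Fin k → ℝ) = k := by simp
    have h3 : Module.finrank ℝ (↥S → ℝ) = S.card := by simp [Fintype.card_coe]
    omega
  rw [Function.not_injective_iff] at hni
  obtain ⟨a', b', hab, hne⟩ := hni
  set a : Fin k → ℝ := a' - b' with ha
  have ha0 : a ≠ 0 := sub_ne_zero.mpr hne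
  have hφa : φ a = 0 := by rw [map_sub, hab, sub_self]
  set y : V → ℝ := ∑ j, a j • x j with hy
  obtain ⟨hypos, hqle⟩ := hq a ha0
  rw [← hy] at hypos hqle
  set d : V → ℝ := fun v => (⇑(e v)) ⬝ᵥ y with hd
  have hdS : ∀ v ∈ S, d v = 0 := by
    intro v hv
    have := congrFun hφa ⟨v, hv⟩
    simpa [φ, ← hy] using this
  have horth : ∀ v w, (⇑(e v)) ⬝ᵥ (⇑(e w)) = if v = w then (1:ℝ) else 0 := by
    intro v w
    have h := e.orthonormal
    rw [orthonormal_iff_ite] at h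
    simpa [PiLp.inner_apply, RCLike.inner_apply, dotProduct, mul_comm] using h v w
  have hyexp : y = ∑ v, d v • (⇑(e v) : V → ℝ) := by
    have h1 := e.sum_repr (WithLp.toLp 2 y)
    have h2 : ∀ v, e.repr (WithLp.toLp 2 y) v = d v := by
      intro v
      rw [e.repr_apply_apply]
      simp [PiLp.inner_apply, RCLike.inner_apply, dotProduct, hd, mul_comm]
    conv_lhs => rw [show y = WithLp.ofLp (WithLp.toLp 2 y) from rfl, ← h1]
    funext u
    simp only [WithLp.ofLp_sum, WithLp.ofLp_smul, Finset.sum_apply, Pi.smul_apply]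
    refine Finset.sum_congr rfl fun v _ => ?_
    rw [h2 v]
  have hyy : y ⬝ᵥ y = ∑ v, d v ^ 2 := by
    conv_lhs => rw [hyexp]
    rw [sum_dotProduct']
    refine Finset.sum_congr rfl fun v _ => ?_
    rw [smul_dotProduct, dotProduct_sum']
    simp [dotProduct_smul, horth, sq, Finset.mul_sum, mul_ite, Finset.sum_ite_eq']
  have hAy : y ⬝ᵥ (A *ᵥ y) = ∑ v, hA.eigenvalues v * d v ^ 2 := by
    have hmul : A *ᵥ y = ∑ v, d v • (hA.eigenvalues v • (⇑(e v) : V → ℝ)) := by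
      conv_lhs => rw [hyexp]
      rw [show (fun v => d v • (⇑(e v) : V → ℝ)) = fun v => d v • (⇑(e v) : V → ℝ) from rfl]
      rw [mulVec_sum']
      refine Finset.sum_congr rfl fun v _ => ?_
      rw [Matrix.mulVec_smul, hA.mulVec_eigenvectorBasis]
    rw [hmul]
    conv_lhs => rw [hyexp]
    rw [sum_dotProduct']
    refine Finset.sum_congr rfl fun v _ => ?_
    rw [smul_dotProduct, dotProduct_sum']
    simp only [dotProduct_smul, smul_eq_mul, horth]
    rw [Finset.sum_eq_single v]
    · simp; ring
    · intro w _ hw; simp [Ne.symm hw]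
    · simp
  have hlt2 : ∑ v, hA.eigenvalues v * d v ^ 2 < c * ∑ v, d v ^ 2 := by
    rw [Finset.mul_sum]
    apply Finset.sum_lt_sum
    · intro v _
      by_cases hv : c ≤ hA.eigenvalues v
      · have : d v = 0 := hdS v (by simp [hS, hv])
        simp [this]
      · push_neg at hv
        nlinarith [sq_nonneg (d v)]
    · have : ∃ v, d v ≠ 0 := by
        by_contra hc
        push_neg at hc
        rw [hyy] at hypos
        simp [hc] at hypos
      obtain ⟨v, hv⟩ := this
      refine ⟨v, Finset.mem_univ v, ?_⟩
      have hvS : ¬ c ≤ hA.eigenvalues v := by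
        intro hcc
        exact hv (hdS v (by simp [hS, hcc]))
      push_neg at hvS
      have : 0 < d v ^ 2 := by positivity
      nlinarith
  rw [hyy, hAy] at hqle
  linarith

lemma sorted_ge {N : ℕ} (g : Fin N → ℝ) (hg : Antitone g) {W : Type*} [Fintype W]
    (μ : W → ℝ) (hspec : (Finset.univ.val.map g) = Finset.univ.val.map μ)
    (c : ℝ) (k : ℕ) (hk : k < N)
    (hcount : k + 1 ≤ (Finset.univ.filter (fun v => c ≤ μ v)).card) :
    c ≤ g ⟨k, hk⟩ := by
  classical
  set T := Finset.univ.filter (fun i : Fin N => c ≤ g i) with hT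
  have hcards : T.card = (Finset.univ.filter (fun v => c ≤ μ v)).card := by
    have h := congrArg (Multiset.countP (fun x : ℝ => c ≤ x)) hspec
    rw [Multiset.countP_map, Multiset.countP_map] at h
    rw [hT]
    simp only [Finset.card, Finset.filter_val]
    convert h using 2
  have hTcard : k + 1 ≤ T.card := hcards ▸ hcount
  have hex : ∃ i ∈ T, k ≤ (i : ℕ) := by
    by_contra hc
    push_neg at hc
    have hle : T.card ≤ (Finset.range k).card :=
      Finset.card_le_card_of_injOn (fun i => (i : ℕ))
        (fun i hi => Finset.mem_range.mpr (hc i hi))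
        (fun i _ j _ h => Fin.ext h)
    rw [Finset.card_range] at hle
    omega
  obtain ⟨i, hiT, hki⟩ := hex
  exact le_trans (Finset.mem_filter.mp hiT).2 (hg (show (⟨k, hk⟩ : Fin N) ≤ i from hki))

end AuxLemmas

section MainProof
open Matrix

/-- For `G = K₁ ∨ K_{n₁,n₂,n₃}` with `n₁ ≥ n₂ ≥ n₃ ≥ 2` (which is the complete 4-partite
graph with one part of size `1`, given by a part function `p`), the three largest
anti-adjacency eigenvalues `ξ₁ ≥ ξ₂ ≥ ξ₃` satisfy `ξ₁ ≥ 2n₁ − 2`, `ξ₂ ≥ 2n₂ − 2` and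
`ξ₃ ≥ 2n₃ − 2`; in particular `G` has at least three strictly positive anti-adjacency
eigenvalues. -/
theorem antiAdj_three_positive_eigenvalues_join_K1_completeTripartite
    {V : Type*} [Fintype V] [DecidableEq V] {n₁ n₂ n₃ : ℕ}
    (hn₁₂ : n₂ ≤ n₁) (hn₂₃ : n₃ ≤ n₂) (hn₃ : 2 ≤ n₃)
    (p : V → Fin 4)
    (h0 : (Finset.univ.filter (fun v => p v = 0)).card = 1)
    (h1 : (Finset.univ.filter (fun v => p v = 1)).card = n₁)
    (h2 : (Finset.univ.filter (fun v => p v = 2)).card = n₂)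
    (h3 : (Finset.univ.filter (fun v => p v = 3)).card = n₃)
    (hcard : Fintype.card V = 1 + n₁ + n₂ + n₃)
    (G : SimpleGraph V) (hGadj : ∀ u v, G.Adj u v ↔ p u ≠ p v)
    (hH : (antiAdj G).IsHermitian)
    (g : Fin (Fintype.card V) → ℝ) (hg : Antitone g)
    (hgspec : (Finset.univ.val.map g) = Finset.univ.val.map hH.eigenvalues) :
    2 * (n₁ : ℝ) - 2 ≤ g ⟨0, by omega⟩ ∧
      2 * (n₂ : ℝ) - 2 ≤ g ⟨1, by omega⟩ ∧
      2 * (n₃ : ℝ) - 2 ≤ g ⟨2, by omega⟩ := by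
  classical
  obtain ⟨w0, hw0⟩ := Finset.card_eq_one.mp h0
  have hp0 : ∀ v, p v = 0 ↔ v = w0 := by
    intro v
    constructor
    · intro h
      have hv : v ∈ Finset.univ.filter (fun v => p v = 0) := by simp [h]
      rw [hw0] at hv; simpa using hv
    · intro h
      rw [h]
      have hv : w0 ∈ Finset.univ.filter (fun v => p v = 0) := by rw [hw0]; simp
      simpa using hv
  have hpw0 : p w0 = 0 := (hp0 w0).mpr rfl
  set nn : Fin 4 → ℕ := ![1, n₁, n₂, n₃] with hnn_def
  have hnn : ∀ i, (Finset.univ.filter (fun v => p v = i)).card = nn i := by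
    intro i
    fin_cases i
    · simpa [hnn_def] using h0
    · simpa [hnn_def] using h1
    · simpa [hnn_def] using h2
    · simpa [hnn_def] using h3
  have hge2 : ∀ i : Fin 4, i ≠ 0 → 2 ≤ nn i := by
    intro i hi
    fin_cases i
    · exact absurd rfl hi
    · simp [hnn_def]; omega
    · simp [hnn_def]; omega
    · simp [hnn_def]; omega
  have hmono : ∀ (i k : Fin 4), 1 ≤ (i:ℕ) → (i:ℕ) ≤ (k:ℕ) → nn k ≤ nn i := by
    intro i k
    fin_cases i <;> fin_cases k <;> simp [hnn_def] <;> omega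
  -- graph distances
  have hadj : ∀ u v, p u ≠ p v → G.Adj u v := fun u v h => (hGadj u v).mpr h
  have hdist1 : ∀ u v, p u ≠ p v → G.dist u v = 1 := fun u v h =>
    SimpleGraph.dist_eq_one_iff_adj.mpr (hadj u v h)
  have hdist2 : ∀ u v, u ≠ v → p u = p v → G.dist u v = 2 := by
    intro u v huv hp
    have hpu : p u ≠ 0 := by
      intro h
      exact huv (((hp0 u).mp h).trans ((hp0 v).mp (hp ▸ h)).symm)
    have ha1 : G.Adj u w0 := hadj u w0 (by rw [hpw0]; exact hpu)
    have ha2 : G.Adj w0 v := hadj w0 v (by rw [hpw0, ← hp]; exact fun h => hpu h.symm)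
    have hle : G.dist u v ≤ 2 := by
      have := SimpleGraph.dist_le
        (SimpleGraph.Walk.cons ha1 (SimpleGraph.Walk.cons ha2 SimpleGraph.Walk.nil))
      simpa using this
    have hne0 : G.dist u v ≠ 0 := by
      intro h
      rcases SimpleGraph.dist_eq_zero_iff_eq_or_not_reachable.mp h with h' | h'
      · exact huv h'
      · exact h' ⟨SimpleGraph.Walk.cons ha1 (SimpleGraph.Walk.cons ha2 SimpleGraph.Walk.nil)⟩
    have hne1 : G.dist u v ≠ 1 := by
      intro h
      exact ((hGadj u v).mp (SimpleGraph.dist_eq_one_iff_adj.mp h)) hp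
    omega
  have hpart : ∀ i : Fin 4, i ≠ 0 → ∀ u, ∃ v, v ≠ u ∧ p v = i := by
    intro i hi u
    have h2' : 2 ≤ (Finset.univ.filter (fun v => p v = i)).card := by
      rw [hnn i]; exact hge2 i hi
    obtain ⟨v, hv, hvu⟩ := Finset.exists_mem_ne
      (s := Finset.univ.filter (fun v => p v = i)) (by omega) u
    exact ⟨v, hvu, (Finset.mem_filter.mp hv).2⟩
  -- eccentricities
  have heccw0 : ecc G w0 = 1 := by
    unfold ecc
    apply le_antisymm
    · apply Finset.sup_le
      intro v _
      by_cases hv : v = w0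
      · simp [hv, SimpleGraph.dist_self]
      · rw [hdist1 w0 v (by rw [hpw0]; exact fun h => hv ((hp0 v).mp h.symm))]
    · obtain ⟨v, hvne, hv⟩ := hpart 1 (by decide) w0
      have hd : G.dist w0 v = 1 := hdist1 w0 v (by rw [hpw0, hv]; decide)
      calc (1:ℕ) = G.dist w0 v := hd.symm
        _ ≤ _ := Finset.le_sup (Finset.mem_univ v)
  have hecc2 : ∀ u, u ≠ w0 → ecc G u = 2 := by
    intro u hu
    have hpu : p u ≠ 0 := fun h => hu ((hp0 u).mp h)
    unfold ecc
    apply le_antisymm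
    · apply Finset.sup_le
      intro v _
      by_cases hv : v = u
      · simp [hv, SimpleGraph.dist_self]
      · by_cases hpv : p u = p v
        · rw [hdist2 u v (Ne.symm hv) hpv]
        · rw [hdist1 u v hpv]; omega
    · obtain ⟨v, hvne, hv⟩ := hpart (p u) hpu u
      have hd : G.dist u v = 2 := hdist2 u v (Ne.symm hvne) hv.symm
      calc (2:ℕ) = G.dist u v := hd.symm
        _ ≤ _ := Finset.le_sup (Finset.mem_univ v)
  -- matrix entries
  have hM : ∀ u v, antiAdj G u v =
      if u = v then 0 else if p u = 0 ∨ p v = 0 then 1 else if p u = p v then 2 else 0 := by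
    intro u v
    rw [antiAdj, Matrix.of_apply]
    by_cases huv : u = v
    · subst huv
      simp [SimpleGraph.dist_self]
    · rw [if_neg huv]
      by_cases hu : u = w0
      · have hpu0 : p u = 0 := by rw [hu]; exact hpw0
        have hvne : v ≠ w0 := fun h => huv (hu.trans h.symm)
        have hpv : p v ≠ 0 := fun h => hvne ((hp0 v).mp h)
        have hd : G.dist u v = 1 := hdist1 u v (by rw [hpu0]; exact fun h => hpv h.symm)
        have he1 : ecc G u = 1 := by rw [hu]; exact heccw0
        rw [hd, he1, hecc2 v hvne, if_pos (Or.inl hpu0)]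
        norm_num
      · by_cases hv : v = w0
        · have hpv0 : p v = 0 := by rw [hv]; exact hpw0
          have hpu : p u ≠ 0 := fun h => hu ((hp0 u).mp h)
          have hd : G.dist u v = 1 := hdist1 u v (by rw [hpv0]; exact hpu)
          have he1 : ecc G v = 1 := by rw [hv]; exact heccw0
          rw [hd, he1, hecc2 u hu, if_pos (Or.inr hpv0)]
          norm_num
        · have hpu : p u ≠ 0 := fun h => hu ((hp0 u).mp h)
          have hpv : p v ≠ 0 := fun h => hv ((hp0 v).mp h)
          rw [hecc2 u hu, hecc2 v hv, if_neg (by tauto : ¬(p u = 0 ∨ p v = 0))]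
          by_cases hp : p u = p v
          · rw [hdist2 u v huv hp, if_pos hp]; norm_num
          · rw [hdist1 u v hp, if_neg hp]; norm_num
  -- the counting claim
  have hcount : ∀ kk : Fin 4, kk ≠ 0 →
      (kk:ℕ) ≤ (Finset.univ.filter
        (fun v => (2*(nn kk:ℝ) - 2) ≤ hH.eigenvalues v)).card := by
    intro kk hkk
    apply key_count hH (x := fun (j : Fin (kk:ℕ)) (v : V) =>
      if (p v : ℕ) = (j:ℕ)+1 then (1:ℝ) else 0) (c := 2*(nn kk:ℝ) - 2)
    intro a ha
    set b : Fin 4 → ℝ := fun i => ∑ j : Fin (kk:ℕ), a j * (if (i:ℕ) = (j:ℕ)+1 then 1 else 0)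
      with hb_def
    have hyfun : (∑ j : Fin (kk:ℕ), a j •
        (fun v => if (p v : ℕ) = (j:ℕ)+1 then (1:ℝ) else 0)) = fun v => b (p v) := by
      funext v
      simp [hb_def, Finset.sum_apply]
    rw [hyfun]
    have hbspec : ∀ i : Fin 4, b i ≠ 0 → 1 ≤ (i:ℕ) ∧ (i:ℕ) ≤ (kk:ℕ) := by
      intro i hb
      by_contra hc
      push_neg at hc
      apply hb
      apply Finset.sum_eq_zero
      intro j _
      have hj := j.isLt
      have hne : (i:ℕ) ≠ (j:ℕ)+1 := by omega
      simp [hne]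
    -- dot product computations
    have hyy : (fun v => b (p v)) ⬝ᵥ (fun v => b (p v)) = ∑ u, b (p u)^2 := by
      simp [dotProduct, sq]
    have hrowsum : ∀ u : V, ∑ v, (if p u = p v then (2:ℝ) else 0) * b (p v)
        = 2 * (nn (p u) : ℝ) * b (p u) := by
      intro u
      have : ∀ v, (if p u = p v then (2:ℝ) else 0) * b (p v)
          = if p v = p u then 2 * b (p u) else 0 := by
        intro v
        by_cases h : p u = p v
        · simp [h, if_pos rfl]
        · simp [h, if_neg (fun h' : p v = p u => h h'.symm)]
      rw [Finset.sum_congr rfl (fun v _ => this v), ← Finset.sum_filter,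
        Finset.sum_const, hnn (p u), nsmul_eq_mul]
      ring
    have hQ : (fun v => b (p v)) ⬝ᵥ (antiAdj G *ᵥ (fun v => b (p v)))
        = ∑ u, (2*(nn (p u):ℝ) - 2) * b (p u)^2 := by
      have hterm : ∀ u v : V, b (p u) * (antiAdj G u v * b (p v))
          = b (p u) * ((if p u = p v then (2:ℝ) else 0) * b (p v))
            - b (p u) * ((if u = v then (2:ℝ) else 0) * b (p v)) := by
        intro u v
        by_cases hbu : b (p u) = 0
        · simp [hbu]
        · by_cases hbv : b (p v) = 0
          · simp [hbv]
          · have hpu : p u ≠ 0 := by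
              intro h
              exact hbu (by rw [h]; simp [hb_def])
            have hpv : p v ≠ 0 := by
              intro h
              exact hbv (by rw [h]; simp [hb_def])
            rw [hM u v]
            by_cases huv : u = v
            · subst huv
              simp
            · rw [if_neg huv, if_neg (by tauto : ¬(p u = 0 ∨ p v = 0)), if_neg huv]
              by_cases hp : p u = p v
              · simp [hp]
              · simp [hp]
      calc (fun v => b (p v)) ⬝ᵥ (antiAdj G *ᵥ (fun v => b (p v)))
          = ∑ u, ∑ v, b (p u) * (antiAdj G u v * b (p v)) := by
            simp [dotProduct, Matrix.mulVec, Finset.mul_sum]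
        _ = ∑ u, ∑ v, (b (p u) * ((if p u = p v then (2:ℝ) else 0) * b (p v))
              - b (p u) * ((if u = v then (2:ℝ) else 0) * b (p v))) := by
            refine Finset.sum_congr rfl fun u _ => Finset.sum_congr rfl fun v _ => hterm u v
        _ = ∑ u, (2*(nn (p u):ℝ) - 2) * b (p u)^2 := by
            refine Finset.sum_congr rfl fun u _ => ?_
            rw [Finset.sum_sub_distrib, ← Finset.mul_sum, hrowsum u, ← Finset.mul_sum]
            have : ∑ v, (if u = v then (2:ℝ) else 0) * b (p v) = 2 * b (p u) := by
              rw [Finset.sum_congr rfl (fun v _ => by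
                rw [ite_mul, zero_mul] : ∀ v ∈ Finset.univ,
                  (if u = v then (2:ℝ) else 0) * b (p v)
                    = if u = v then 2 * b (p v) else 0)]
              simp [Finset.sum_ite_eq]
            rw [this]
            ring
    constructor
    · rw [hyy]
      obtain ⟨j, hj⟩ := Function.ne_iff.mp ha
      have hjlt : (j:ℕ)+1 < 4 := by
        have h1' := j.isLt
        have h2' := kk.isLt
        omega
      have hbi : b ⟨(j:ℕ)+1, hjlt⟩ = a j := by
        simp only [hb_def]
        rw [Finset.sum_eq_single j]
        · simp
        · intro j' _ hj'
          have hne : ((⟨(j:ℕ)+1, hjlt⟩ : Fin 4) : ℕ) ≠ (j':ℕ)+1 := by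
            simp only [Fin.val_mk]
            intro h
            exact hj' (Fin.ext (by omega)).symm
          simp [hne, Fin.val_inj, Ne.symm hj']
        · simp
      obtain ⟨u, hu⟩ : ∃ u, p u = ⟨(j:ℕ)+1, hjlt⟩ := by
        have h2' : 2 ≤ nn ⟨(j:ℕ)+1, hjlt⟩ :=
          hge2 _ (by intro h; exact absurd (congrArg Fin.val h) (by simp))
        rw [← hnn] at h2'
        obtain ⟨u, hu⟩ := Finset.card_pos.mp (lt_of_lt_of_le (by omega) h2')
        exact ⟨u, (Finset.mem_filter.mp hu).2⟩
      apply Finset.sum_pos' (fun v _ => sq_nonneg _)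
      refine ⟨u, Finset.mem_univ u, ?_⟩
      rw [hu, hbi]
      exact lt_of_le_of_ne (sq_nonneg _) (Ne.symm (pow_ne_zero 2 hj))
    · rw [hyy, hQ, Finset.mul_sum]
      apply Finset.sum_le_sum
      intro u _
      by_cases hb : b (p u) = 0
      · simp [hb]
      · have hsp := hbspec (p u) hb
        have hmn : (nn kk : ℝ) ≤ (nn (p u) : ℝ) :=
          Nat.cast_le.mpr (hmono (p u) kk hsp.1 hsp.2)
        nlinarith [sq_nonneg (b (p u))]
  -- conclude via sorted_ge
  have hcard7 : 7 ≤ Fintype.card V := by omega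
  refine ⟨?_, ?_, ?_⟩
  · have hc := hcount 1 (by decide)
    have := sorted_ge g hg hH.eigenvalues hgspec (2*(nn 1:ℝ) - 2) 0 (by omega)
      (by simpa using hc)
    simpa [hnn_def] using this
  · have hc := hcount 2 (by decide)
    have := sorted_ge g hg hH.eigenvalues hgspec (2*(nn 2:ℝ) - 2) 1 (by omega)
      (by simpa using hc)
    simpa [hnn_def] using this
  · have hc := hcount 3 (by decide)
    have := sorted_ge g hg hH.eigenvalues hgspec (2*(nn 3:ℝ) - 2) 2 (by omega)
      (by simpa using hc)
    simpa [hnn_def] using this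

end MainProof
end
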